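/- arXiv:math/0504074 — 5 statements merged into one kernel-verified Lean document; each statement's English description precedes it below -/
import Mathlib

section
/- Let F be a field of characteristic zero, let q ∈ F be nonzero, and let a, b, c ∈ F with a ≠ 0 and c ≠ 0. The quadratic form f = a·x² + b·x·y + c·y² in the quantum plane O_q(F²) is reducible if and only if there exists d ∈ F such that d² = b² − 4·a·c·q. -/
noncomputable section

/-- The defining relation of the quantum plane: `y * x = q • (x * y)`. -/
inductive QRel (F : Type) [Field F] (q : F) :
    FreeAlgebra F (Fin 2) → FreeAlgebra F (Fin 2) → Prop
  | rel : QRel F q (FreeAlgebra.ι F 1 * FreeAlgebra.ι F 0)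
      (q • (FreeAlgebra.ι F 0 * FreeAlgebra.ι F 1))

/-- The quantum plane `O_q(F²)`. -/
abbrev QPlane (F : Type) [Field F] (q : F) : Type := RingQuot (QRel F q)

/-- The generator `x` of the quantum plane. -/
def Qx (F : Type) [Field F] (q : F) : QPlane F q :=
  RingQuot.mkAlgHom F (QRel F q) (FreeAlgebra.ι F 0)

/-- The generator `y` of the quantum plane. -/
def Qy (F : Type) [Field F] (q : F) : QPlane F q :=
  RingQuot.mkAlgHom F (QRel F q) (FreeAlgebra.ι F 1)

/-- An element of the quantum plane is constant if it is in the image of the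
structure map `F → O_q(F²)`. -/
def IsConstQP (F : Type) [Field F] (q : F) (f : QPlane F q) : Prop :=
  f ∈ Set.range (algebraMap F (QPlane F q))

/-- A (nonzero) element is reducible if it is a product of two nonconstant elements. -/
def IsReducibleQP (F : Type) [Field F] (q : F) (f : QPlane F q) : Prop :=
  ∃ g h : QPlane F q, ¬ IsConstQP F q g ∧ ¬ IsConstQP F q h ∧ f = g * h

namespace QAux

open MvPolynomial

variable {F : Type} [Field F] (q : F)

/-- the model polynomial ring -/
abbrev RR (F : Type) [Field F] : Type := MvPolynomial (Fin 2) F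

/-- rescaling the first variable by q -/
def qsig : RR F →ₐ[F] RR F := aeval ![q • X 0, X 1]

@[simp] lemma qsig_X0 : qsig q (X 0) = q • (X 0 : RR F) := by simp [qsig]
@[simp] lemma qsig_X1 : qsig q (X 1) = (X 1 : RR F) := by simp [qsig]

def Lx : Module.End F (RR F) := LinearMap.mulLeft F (X 0)
def Ly : Module.End F (RR F) := (LinearMap.mulLeft F (X 1)) ∘ₗ (qsig q).toLinearMap

@[simp] lemma Lx_apply (w : RR F) : Lx w = X 0 * w := rfl
@[simp] lemma Ly_apply (w : RR F) : Ly q w = X 1 * qsig q w := rfl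

lemma rel_holds : Ly q * Lx = q • (Lx * (Ly q : Module.End F (RR F))) := by
  apply LinearMap.ext
  intro w
  simp [Module.End.mul_apply, map_mul, Algebra.smul_def]
  ring

def Phi : QPlane F q →ₐ[F] Module.End F (RR F) :=
  RingQuot.liftAlgHom F ⟨FreeAlgebra.lift F ![Lx, Ly q], by
    rintro _ _ ⟨⟩
    simp [map_mul, map_smul, rel_holds]⟩

@[simp] lemma Phi_x : Phi q (Qx F q) = Lx := by
  simp [Phi, Qx, RingQuot.liftAlgHom_mkAlgHom_apply]

@[simp] lemma Phi_y : Phi q (Qy F q) = Ly q := by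
  simp [Phi, Qy, RingQuot.liftAlgHom_mkAlgHom_apply]


/-- monomial in the quantum plane -/
def mono (i j : ℕ) : QPlane F q := Qx F q ^ i * Qy F q ^ j

/-- exponent finsupp -/
def Em (i j : ℕ) : Fin 2 →₀ ℕ := Finsupp.single 0 i + Finsupp.single 1 j

@[simp] lemma Em_apply0 (i j : ℕ) : Em i j 0 = i := by simp [Em]
@[simp] lemma Em_apply1 (i j : ℕ) : Em i j 1 = j := by
  simp [Em, Finsupp.single_apply]

lemma fin2_eta (s : Fin 2 →₀ ℕ) : Em (s 0) (s 1) = s := by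
  ext i
  fin_cases i <;> simp

@[simp] lemma Em_inj {i j k l : ℕ} : Em i j = Em k l ↔ i = k ∧ j = l := by
  constructor
  · intro h
    constructor
    · simpa using congrArg (fun u => u 0) h
    · simpa using congrArg (fun u => u 1) h
  · rintro ⟨rfl, rfl⟩; rfl

lemma Em_add (i j k l : ℕ) : Em i j + Em k l = Em (i + k) (j + l) := by
  ext t; fin_cases t <;> simp

lemma Em_zero : Em 0 0 = 0 := by ext t; fin_cases t <;> simp

/-- the basic commutation relation in the quantum plane -/
lemma rel0 : Qy F q * Qx F q = q • (Qx F q * Qy F q) := by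
  have := RingQuot.mkAlgHom_rel F (QRel.rel (F := F) (q := q))
  simpa [Qx, Qy, map_mul, map_smul] using this

lemma y_xpow (k : ℕ) : Qy F q * Qx F q ^ k = q ^ k • (Qx F q ^ k * Qy F q) := by
  induction k with
  | zero => simp
  | succ k ih =>
    rw [pow_succ, ← mul_assoc, ih, smul_mul_assoc, mul_assoc, rel0, mul_smul_comm,
      smul_smul, pow_succ]
    ring_nf
    rw [mul_assoc]

lemma ypow_xpow (j k : ℕ) :
    Qy F q ^ j * Qx F q ^ k = q ^ (j * k) • (Qx F q ^ k * Qy F q ^ j) := by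
  induction j with
  | zero => simp
  | succ j ih =>
    rw [pow_succ, mul_assoc, y_xpow, mul_smul_comm, ← mul_assoc, ih, smul_mul_assoc,
      smul_smul, mul_assoc, ← pow_succ]
    congr 1
    ring

lemma mono_mul (i j k l : ℕ) :
    mono q i j * mono q k l = q ^ (j * k) • mono q (i + k) (j + l) := by
  unfold mono
  rw [mul_assoc, ← mul_assoc (Qy F q ^ j), ypow_xpow, smul_mul_assoc, mul_smul_comm]
  congr 1
  simp [pow_add, mul_assoc]

/-- evaluation of the regular representation at 1 -/
def evQ : QPlane F q →ₗ[F] RR F where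
  toFun f := Phi q f 1
  map_add' f g := by simp
  map_smul' r f := by simp

lemma evQ_mul (g h : QPlane F q) : evQ q (g * h) = Phi q g (evQ q h) := by
  simp [evQ, map_mul]

lemma Lypow (j : ℕ) (w : RR F) :
    (Ly q ^ j) w = X 1 ^ j * ((qsig q).toLinearMap ^ j) w := by
  induction j with
  | zero => simp
  | succ j ih =>
    rw [pow_succ', Module.End.mul_apply, ih, Ly_apply, map_mul, map_pow, qsig_X1,
      pow_succ' (X 1 : RR F), pow_succ' (qsig q).toLinearMap, Module.End.mul_apply]
    simp [mul_assoc]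

lemma Lxpow (i : ℕ) (w : RR F) : (Lx ^ i) w = X 0 ^ i * w := by
  rw [Lx, LinearMap.pow_mulLeft, LinearMap.mulLeft_apply]

lemma sigpow_one (j : ℕ) : ((qsig q).toLinearMap ^ j) (1 : RR F) = 1 := by
  induction j with
  | zero => simp
  | succ j ih => rw [pow_succ', Module.End.mul_apply, ih]; simp

lemma evQ_mono (i j : ℕ) : evQ q (mono q i j) = monomial (Em i j) 1 := by
  have h1 : evQ q (mono q i j) = (Lx ^ i) ((Ly q ^ j) (1 : RR F)) := by
    simp [evQ, mono, map_mul, map_pow, Module.End.mul_apply]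
  rw [h1, Lypow, sigpow_one, Lxpow, mul_one, X_pow_eq_monomial, X_pow_eq_monomial,
    monomial_mul, one_mul, Em]

lemma span_top (f : QPlane F q) :
    f ∈ Submodule.span F (Set.range fun s : Fin 2 →₀ ℕ => mono q (s 0) (s 1)) := by
  set V : (Fin 2 →₀ ℕ) → QPlane F q := fun s => mono q (s 0) (s 1) with hV
  set P : Submodule F (QPlane F q) := Submodule.span F (Set.range V) with hP
  have hone : (1 : QPlane F q) ∈ P := by
    apply Submodule.subset_span
    exact ⟨0, by simp [hV, mono]⟩
  have hmulV : ∀ s t : Fin 2 →₀ ℕ, V s * V t ∈ P := by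
    intro s t
    have : V s * V t = q ^ (s 1 * t 0) • V (s + t) := by
      simp only [hV, mono_mul, Finsupp.add_apply]
    rw [this]
    exact Submodule.smul_mem _ _ (Submodule.subset_span ⟨s + t, rfl⟩)
  have hmul : ∀ (x y : QPlane F q), x ∈ P → y ∈ P → x * y ∈ P := by
    intro x y hx hy
    induction hx using Submodule.span_induction with
    | mem u hu =>
      obtain ⟨s, rfl⟩ := hu
      induction hy using Submodule.span_induction with
      | mem v hv => obtain ⟨t, rfl⟩ := hv; exact hmulV s t
      | zero => simpa using P.zero_mem
      | add u v _ _ h1 h2 => rw [mul_add]; exact P.add_mem h1 h2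
      | smul r u _ h1 => rw [mul_smul_comm]; exact P.smul_mem r h1
    | zero => simpa using P.zero_mem
    | add u v _ _ h1 h2 => rw [add_mul]; exact P.add_mem h1 h2
    | smul r u _ h1 => rw [smul_mul_assoc]; exact P.smul_mem r h1
  let S : Subalgebra F (QPlane F q) := P.toSubalgebra hone hmul
  have hxS : Qx F q ∈ S := by
    apply Submodule.subset_span
    refine ⟨Em 1 0, ?_⟩
    simp [hV, mono]
  have hyS : Qy F q ∈ S := by
    apply Submodule.subset_span
    refine ⟨Em 0 1, ?_⟩
    simp [hV, mono]
  have htop : (⊤ : Subalgebra F (QPlane F q)) ≤ S := by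
    have h1 : (Algebra.adjoin F (Set.range (FreeAlgebra.ι F : Fin 2 → FreeAlgebra F (Fin 2)))).map
        (RingQuot.mkAlgHom F (QRel F q)) = ⊤ := by
      rw [FreeAlgebra.adjoin_range_ι, Algebra.map_top]
      exact AlgHom.range_eq_top _ |>.mpr (RingQuot.mkAlgHom_surjective F (QRel F q))
    rw [← h1, AlgHom.map_adjoin]
    apply Algebra.adjoin_le
    rw [← Set.range_comp, Set.range_subset_iff]
    intro i
    fin_cases i
    · exact hxS
    · exact hyS
  exact htop (by trivial)

lemma reprQ (f : QPlane F q) :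
    f = ∑ s ∈ (evQ q f).support, coeff s (evQ q f) • mono q (s 0) (s 1) := by
  obtain ⟨cc, hcc⟩ := Finsupp.mem_span_range_iff_exists_finsupp.mp (span_top q f)
  have hev : ∀ t, coeff t (evQ q f) = cc t := by
    intro t
    conv_lhs => rw [← hcc]
    rw [Finsupp.sum, map_sum, coeff_sum]
    have : ∀ s ∈ cc.support,
        coeff t (evQ q (cc s • mono q (s 0) (s 1))) = if s = t then cc s else 0 := by
      intro s _
      rw [map_smul, evQ_mono, fin2_eta, coeff_smul, coeff_monomial]
      simp [smul_eq_mul, mul_ite]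
    rw [Finset.sum_congr rfl this, Finset.sum_ite_eq' cc.support t cc]
    by_cases h : t ∈ cc.support
    · simp [h]
    · simp [h, Finsupp.notMem_support_iff.mp h]
  have hsupp : (evQ q f).support = cc.support := by
    ext s
    simp [mem_support_iff, hev, Finsupp.mem_support_iff]
  rw [hsupp, Finset.sum_congr rfl (fun s _ => by rw [hev])]
  conv_lhs => rw [← hcc]
  rfl

/-- coefficient of an element of the quantum plane -/
def cf (f : QPlane F q) (s : Fin 2 →₀ ℕ) : F := coeff s (evQ q f)

lemma cf_add (f g : QPlane F q) (u) : cf q (f + g) u = cf q f u + cf q g u := by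
  simp [cf, map_add]

lemma cf_smul (r : F) (f : QPlane F q) (u) : cf q (r • f) u = r * cf q f u := by
  simp [cf, map_smul]

lemma cf_mono (i j : ℕ) (u) : cf q (mono q i j) u = if Em i j = u then 1 else 0 := by
  rw [cf, evQ_mono, coeff_monomial]

lemma mem_supp_iff (f : QPlane F q) (s) : s ∈ (evQ q f).support ↔ cf q f s ≠ 0 := by
  rw [mem_support_iff]; rfl

lemma qsig_monomial (n : Fin 2 →₀ ℕ) (r : F) :
    qsig q (monomial n r) = q ^ (n 0) • monomial n r := by
  have hdec : (monomial n r : RR F) = C r * X 0 ^ (n 0) * X 1 ^ (n 1) := by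
    conv_lhs => rw [← fin2_eta n]
    rw [Em, X_pow_eq_monomial, X_pow_eq_monomial, C_apply, monomial_mul, monomial_mul]
    simp
  have hC : qsig q (C r) = C r := by simp [qsig]
  rw [hdec, map_mul, map_mul, map_pow, map_pow, qsig_X0, qsig_X1, hC, smul_pow]
  rw [mul_smul_comm, smul_mul_assoc]

lemma coeff_sig (s : Fin 2 →₀ ℕ) (w : RR F) :
    coeff s (qsig q w) = q ^ (s 0) * coeff s w := by
  induction w using MvPolynomial.induction_on' with
  | add p r hp hr => simp [map_add, hp, hr, mul_add]
  | monomial n r =>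
    rw [qsig_monomial, coeff_smul, coeff_monomial, smul_eq_mul]
    split_ifs with hh
    · subst hh; ring
    · ring

lemma coeff_sigpow (j : ℕ) (s : Fin 2 →₀ ℕ) (w : RR F) :
    coeff s (((qsig q).toLinearMap ^ j) w) = q ^ (j * (s 0)) * coeff s w := by
  induction j with
  | zero => simp
  | succ j ih =>
    rw [pow_succ', Module.End.mul_apply, AlgHom.toLinearMap_apply, coeff_sig, ih]
    rw [← mul_assoc, ← pow_add]
    ring_nf

lemma Phi_mono_apply (i j : ℕ) (w : RR F) :
    Phi q (mono q i j) w = monomial (Em i j) 1 * ((qsig q).toLinearMap ^ j) w := by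
  rw [mono, map_mul, map_pow, map_pow, Phi_x, Phi_y, Module.End.mul_apply, Lxpow, Lypow]
  rw [X_pow_eq_monomial, X_pow_eq_monomial, ← mul_assoc, monomial_mul, one_mul]
  rw [Em]

lemma cf_mul_eq (g h : QPlane F q) (u : Fin 2 →₀ ℕ) :
    cf q (g * h) u = ∑ s ∈ (evQ q g).support,
      (if s ≤ u then cf q g s * (q ^ (s 1 * (u 0 - s 0)) * cf q h (u - s)) else 0) := by
  rw [cf, evQ_mul]
  conv_lhs => rw [reprQ q g]
  rw [map_sum, LinearMap.sum_apply, coeff_sum]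
  apply Finset.sum_congr rfl
  intro s hs
  rw [map_smul, LinearMap.smul_apply, coeff_smul, Phi_mono_apply, fin2_eta,
    coeff_monomial_mul', coeff_sigpow, Finsupp.tsub_apply]
  rw [smul_eq_mul, mul_ite, mul_zero, one_mul]
  rfl

lemma cf_mul_support (g h : QPlane F q) {u : Fin 2 →₀ ℕ} (hu : cf q (g * h) u ≠ 0) :
    ∃ s t, cf q g s ≠ 0 ∧ cf q h t ≠ 0 ∧ s + t = u := by
  rw [cf_mul_eq] at hu
  obtain ⟨s, hs, hterm⟩ := Finset.exists_ne_zero_of_sum_ne_zero hu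
  by_cases hle : s ≤ u
  · rw [if_pos hle] at hterm
    refine ⟨s, u - s, (mem_supp_iff q g s).mp hs, ?_, add_tsub_cancel_of_le hle⟩
    intro h0; rw [h0] at hterm; simp at hterm
  · rw [if_neg hle] at hterm; exact absurd rfl hterm

lemma fin2_cases {a b : Fin 2} (hab : a ≠ b) (i : Fin 2) : i = a ∨ i = b := by
  fin_cases a <;> fin_cases b <;> fin_cases i <;> simp_all

lemma lead_mul (hq : q ≠ 0) {a b : Fin 2} (hab : a ≠ b) (g h : QPlane F q)
    {sg sh : Fin 2 →₀ ℕ}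
    (hg1 : cf q g sg ≠ 0) (hg2 : ∀ s, cf q g s ≠ 0 → s a ≤ sg a ∧ (s a = sg a → s b ≤ sg b))
    (hh1 : cf q h sh ≠ 0) (hh2 : ∀ t, cf q h t ≠ 0 → t a ≤ sh a ∧ (t a = sh a → t b ≤ sh b)) :
    cf q (g * h) (sg + sh) ≠ 0 := by
  rw [cf_mul_eq]
  rw [Finset.sum_eq_single sg]
  · have hle : sg ≤ sg + sh := Finsupp.le_def.mpr fun i => by simp
    rw [if_pos hle, add_tsub_cancel_left]
    exact mul_ne_zero hg1 (mul_ne_zero (pow_ne_zero _ hq) hh1)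
  · intro s hs hne
    by_cases hle : s ≤ sg + sh
    · rw [if_pos hle]
      by_cases hcf : cf q h (sg + sh - s) = 0
      · rw [hcf]; ring
      · exfalso
        apply hne
        have hbg := hg2 s ((mem_supp_iff q g s).mp hs)
        have hbh := hh2 _ hcf
        have hadd : ∀ i : Fin 2, s i + (sg + sh - s) i = sg i + sh i := by
          intro i
          rw [Finsupp.tsub_apply, Finsupp.add_apply]
          have := Finsupp.le_def.mp hle i
          rw [Finsupp.add_apply] at this
          omega
        have ha1 : s a = sg a := by
          have h1 := hbg.1
          have h2 := hbh.1
          have h3 := hadd a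
          omega
        have hb1 : s b = sg b := by
          have h1 := hbg.2 ha1
          have h2 := hbh.2 (by have := hadd a; omega)
          have h3 := hadd b
          omega
        ext i
        rcases fin2_cases hab i with rfl | rfl
        · exact ha1
        · exact hb1
    · rw [if_neg hle]
  · intro hns
    exact absurd ((mem_supp_iff q g sg).mpr hg1) hns

lemma exists_lead {g : QPlane F q} {s0 : Fin 2 →₀ ℕ} (hs0 : cf q g s0 ≠ 0) (a b : Fin 2) :
    ∃ sg, cf q g sg ≠ 0 ∧ ∀ s, cf q g s ≠ 0 → s a ≤ sg a ∧ (s a = sg a → s b ≤ sg b) := by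
  have hne : (evQ q g).support.Nonempty := ⟨s0, (mem_supp_iff q g s0).mpr hs0⟩
  obtain ⟨m, hm, hmax⟩ := Finset.exists_max_image (evQ q g).support (fun s => s a) hne
  have hneT : ((evQ q g).support.filter (fun s => s a = m a)).Nonempty :=
    ⟨m, by simp [hm]⟩
  obtain ⟨m2, hm2, hmax2⟩ :=
    Finset.exists_max_image _ (fun s => s b) hneT
  obtain ⟨hm2s, hm2a⟩ := Finset.mem_filter.mp hm2
  refine ⟨m2, (mem_supp_iff q g m2).mp hm2s, ?_⟩
  intro s hs
  have hsupp := (mem_supp_iff q g s).mpr hs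
  constructor
  · rw [hm2a]; exact hmax s hsupp
  · intro heq
    refine hmax2 s (Finset.mem_filter.mpr ⟨hsupp, ?_⟩)
    omega

lemma mono00 : mono q 0 0 = (1 : QPlane F q) := by simp [mono]
lemma mono10 : mono q 1 0 = Qx F q := by simp [mono]
lemma mono01 : mono q 0 1 = Qy F q := by simp [mono]
lemma mono20 : mono q 2 0 = Qx F q ^ 2 := by simp [mono]
lemma mono11 : mono q 1 1 = Qx F q * Qy F q := by simp [mono]
lemma mono02 : mono q 0 2 = Qy F q ^ 2 := by simp [mono]

lemma cf_one (u) : cf q (1 : QPlane F q) u = if Em 0 0 = u then 1 else 0 := by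
  rw [← mono00, cf_mono]
lemma cf_X (u) : cf q (Qx F q) u = if Em 1 0 = u then 1 else 0 := by
  rw [← mono10, cf_mono]
lemma cf_Y (u) : cf q (Qy F q) u = if Em 0 1 = u then 1 else 0 := by
  rw [← mono01, cf_mono]
lemma cf_X2 (u) : cf q (Qx F q ^ 2) u = if Em 2 0 = u then 1 else 0 := by
  rw [← mono20, cf_mono]
lemma cf_XY (u) : cf q (Qx F q * Qy F q) u = if Em 1 1 = u then 1 else 0 := by
  rw [← mono11, cf_mono]
lemma cf_Y2 (u) : cf q (Qy F q ^ 2) u = if Em 0 2 = u then 1 else 0 := by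
  rw [← mono02, cf_mono]
lemma cf_XX (u) : cf q (Qx F q * Qx F q) u = if Em 2 0 = u then 1 else 0 := by
  rw [← pow_two, cf_X2]
lemma cf_YY (u) : cf q (Qy F q * Qy F q) u = if Em 0 2 = u then 1 else 0 := by
  rw [← pow_two, cf_Y2]
lemma cf_YX (u) : cf q (Qy F q * Qx F q) u = if Em 1 1 = u then q else 0 := by
  rw [rel0, cf_smul, cf_XY, mul_ite, mul_one, mul_zero]

lemma cf_algebraMap (r : F) (u) :
    cf q (algebraMap F (QPlane F q) r) u = if Em 0 0 = u then r else 0 := by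
  rw [Algebra.algebraMap_eq_smul_one, cf_smul, cf_one, mul_ite, mul_one, mul_zero]

lemma triple_repr {g : QPlane F q}
    (hsupp : ∀ s, cf q g s ≠ 0 → s = Em 0 0 ∨ s = Em 1 0 ∨ s = Em 0 1) :
    g = cf q g (Em 0 0) • (1 : QPlane F q) + cf q g (Em 1 0) • Qx F q
        + cf q g (Em 0 1) • Qy F q := by
  have hsub : (evQ q g).support ⊆ {Em 0 0, Em 1 0, Em 0 1} := by
    intro s hs
    rcases hsupp s ((mem_supp_iff q g s).mp hs) with h | h | h <;> simp [h]
  have h1 := reprQ q g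
  rw [Finset.sum_subset hsub] at h1
  · conv_lhs => rw [h1]
    have hne1 : (Em 0 0 : Fin 2 →₀ ℕ) ∉ ({Em 1 0, Em 0 1} : Finset (Fin 2 →₀ ℕ)) := by
      simp only [Finset.mem_insert, Finset.mem_singleton, Em_inj]
      norm_num
    have hne2 : (Em 1 0 : Fin 2 →₀ ℕ) ∉ ({Em 0 1} : Finset (Fin 2 →₀ ℕ)) := by
      simp only [Finset.mem_singleton, Em_inj]
      norm_num
    rw [show ({Em 0 0, Em 1 0, Em 0 1} : Finset (Fin 2 →₀ ℕ))
        = insert (Em 0 0) (insert (Em 1 0) {Em 0 1}) from rfl,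
      Finset.sum_insert hne1, Finset.sum_insert hne2, Finset.sum_singleton]
    simp only [Em_apply0, Em_apply1, mono00, mono10, mono01, cf]
    rw [← add_assoc]
  · intro s _ hns
    have : cf q g s = 0 := by
      by_contra hcf
      exact hns ((mem_supp_iff q g s).mpr hcf)
    rw [cf] at this
    rw [this, zero_smul]

lemma const_of_cf {g : QPlane F q} (hg : ∀ s, s ≠ 0 → cf q g s = 0) :
    IsConstQP F q g := by
  refine ⟨cf q g 0, ?_⟩
  have hsupp : ∀ s, cf q g s ≠ 0 → s = Em 0 0 ∨ s = Em 1 0 ∨ s = Em 0 1 := by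
    intro s hs
    left
    rw [Em_zero]
    by_contra hne
    exact hs (hg s hne)
  have h1 := triple_repr q hsupp
  have h10 : cf q g (Em 1 0) = 0 := by
    apply hg
    intro hcon
    exact absurd (congrArg (fun u => u 0) hcon) (by simp)
  have h01 : cf q g (Em 0 1) = 0 := by
    apply hg
    intro hcon
    exact absurd (congrArg (fun u => u 1) hcon) (by simp)
  rw [h10, h01, zero_smul, zero_smul, add_zero, add_zero, Em_zero] at h1
  rw [Algebra.algebraMap_eq_smul_one, ← h1]

lemma nonconst_ex {g : QPlane F q} (hg : ¬ IsConstQP F q g) :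
    ∃ s, s ≠ 0 ∧ cf q g s ≠ 0 := by
  by_contra hcon
  push_neg at hcon
  exact hg (const_of_cf q fun s hs => hcon s hs)

lemma expandQ (γ α β γ' α' β' : F) :
    (γ • (1 : QPlane F q) + α • Qx F q + β • Qy F q)
      * (γ' • (1 : QPlane F q) + α' • Qx F q + β' • Qy F q)
    = (γ * γ') • (1 : QPlane F q) + (γ * α' + α * γ') • Qx F q
      + (γ * β' + β * γ') • Qy F q + (α * α') • (Qx F q * Qx F q)
      + (α * β' + q * (β * α')) • (Qx F q * Qy F q) + (β * β') • (Qy F q * Qy F q) := by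
  simp only [mul_add, add_mul, smul_mul_assoc, mul_smul_comm, smul_smul, mul_one, one_mul,
    rel0, add_smul]
  module

lemma fin2_ne_cases {aco bco : Fin 2} (hab : aco ≠ bco) :
    (aco = 0 ∧ bco = 1) ∨ (aco = 1 ∧ bco = 0) := by
  fin_cases aco <;> fin_cases bco <;> simp_all

lemma orient (hq : q ≠ 0) {g h : QPlane F q} {aco bco : Fin 2} (hab : aco ≠ bco)
    (hsum2 : ∀ u : Fin 2 →₀ ℕ, cf q (g * h) u ≠ 0 → u 0 + u 1 = 2)
    {w : Fin 2 →₀ ℕ} (hw : cf q (g * h) w ≠ 0) (hwa : w aco = 2)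
    {sg0 sh0 : Fin 2 →₀ ℕ} (hsg0ne : sg0 ≠ 0) (hsg0 : cf q g sg0 ≠ 0)
    (hsh0ne : sh0 ≠ 0) (hsh0 : cf q h sh0 ≠ 0) :
    (∃ sg, cf q g sg ≠ 0 ∧ sg aco = 1 ∧ sg bco = 0
        ∧ ∀ s, cf q g s ≠ 0 → s aco ≤ 1 ∧ (s aco = 1 → s bco = 0))
    ∧ (∃ sh, cf q h sh ≠ 0 ∧ sh aco = 1 ∧ sh bco = 0
        ∧ ∀ s, cf q h s ≠ 0 → s aco ≤ 1 ∧ (s aco = 1 → s bco = 0)) := by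
  have hperm : ∀ u : Fin 2 →₀ ℕ, u aco + u bco = u 0 + u 1 := by
    intro u
    rcases fin2_ne_cases hab with ⟨h1, h2⟩ | ⟨h1, h2⟩ <;> subst h1 <;> subst h2 <;> omega
  obtain ⟨sg, hsg, hsgb⟩ := exists_lead q hsg0 aco bco
  obtain ⟨sh, hsh, hshb⟩ := exists_lead q hsh0 aco bco
  have hlead := lead_mul q hq hab g h hsg hsgb hsh hshb
  have hs2 := hsum2 _ hlead
  have hco : sg aco + sh aco + (sg bco + sh bco) = 2 := by
    have h1 := hperm (sg + sh)
    have h2 := hs2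
    simp only [Finsupp.add_apply] at h1 h2
    omega
  obtain ⟨s, t, hgs, hht, hst⟩ := cf_mul_support q g h hw
  have h2le : 2 ≤ sg aco + sh aco := by
    have h1 : s aco ≤ sg aco := (hsgb s hgs).1
    have h2 : t aco ≤ sh aco := (hshb t hht).1
    have h3 : s aco + t aco = 2 := by
      have h4 := congrArg (fun u : Fin 2 →₀ ℕ => u aco) hst
      simp only [Finsupp.add_apply] at h4
      omega
    omega
  have hgb0 : sg bco = 0 := by omega
  have hhb0 : sh bco = 0 := by omega
  have hga : 1 ≤ sg aco := by
    by_contra hcon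
    have hb := hsgb sg0 hsg0
    apply hsg0ne
    ext i
    rcases fin2_cases hab i with rfl | rfl
    · simp; omega
    · simp
      have := hb.2 (by omega)
      omega
  have hha : 1 ≤ sh aco := by
    by_contra hcon
    have hb := hshb sh0 hsh0
    apply hsh0ne
    ext i
    rcases fin2_cases hab i with rfl | rfl
    · simp; omega
    · simp
      have := hb.2 (by omega)
      omega
  refine ⟨⟨sg, hsg, by omega, hgb0, ?_⟩, ⟨sh, hsh, by omega, hhb0, ?_⟩⟩
  · intro s' hs'
    have hb := hsgb s' hs'
    exact ⟨by omega, fun h1 => by have := hb.2 (by omega); omega⟩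
  · intro t' ht'
    have hb := hshb t' ht'
    exact ⟨by omega, fun h1 => by have := hb.2 (by omega); omega⟩

lemma forward_dir (hq : q ≠ 0) {a b c : F} (ha : a ≠ 0) (hc : c ≠ 0)
    {g h : QPlane F q} (hgc : ¬ IsConstQP F q g) (hhc : ¬ IsConstQP F q h)
    (hf : a • (Qx F q ^ 2) + b • (Qx F q * Qy F q) + c • (Qy F q ^ 2) = g * h) :
    ∃ d : F, d ^ 2 = b ^ 2 - 4 * a * c * q := by
  have cff : ∀ u, cf q (g * h) u =
      (if Em 2 0 = u then a else 0) + (if Em 1 1 = u then b else 0)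
        + (if Em 0 2 = u then c else 0) := by
    intro u
    rw [← hf, cf_add, cf_add, cf_smul, cf_smul, cf_smul, cf_X2, cf_XY, cf_Y2]
    simp only [mul_ite, mul_one, mul_zero]
  have hsum2 : ∀ u : Fin 2 →₀ ℕ, cf q (g * h) u ≠ 0 → u 0 + u 1 = 2 := by
    intro u hu
    rw [cff] at hu
    by_contra hne
    have h1 : ¬ (Em 2 0 = u) := fun he => hne (by rw [← he]; simp)
    have h2 : ¬ (Em 1 1 = u) := fun he => hne (by rw [← he]; simp)
    have h3 : ¬ (Em 0 2 = u) := fun he => hne (by rw [← he]; simp)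
    rw [if_neg h1, if_neg h2, if_neg h3] at hu
    simp at hu
  obtain ⟨sg0, hsg0ne, hsg0⟩ := nonconst_ex q hgc
  obtain ⟨sh0, hsh0ne, hsh0⟩ := nonconst_ex q hhc
  have hw0 : cf q (g * h) (Em 2 0) ≠ 0 := by
    rw [cff]
    simp only [Em_inj]
    norm_num [ha]
  have hw1 : cf q (g * h) (Em 0 2) ≠ 0 := by
    rw [cff]
    simp only [Em_inj]
    norm_num [hc]
  obtain ⟨⟨sg, hsgcf, hsga, hsgb, hgbd0⟩, ⟨sh, hshcf, hsha, hshb, hhbd0⟩⟩ :=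
    orient q hq (show (0 : Fin 2) ≠ 1 by decide) hsum2 hw0 (by simp)
      hsg0ne hsg0 hsh0ne hsh0
  obtain ⟨⟨sg', hsgcf', hsga', hsgb', hgbd1⟩, ⟨sh', hshcf', hsha', hshb', hhbd1⟩⟩ :=
    orient q hq (show (1 : Fin 2) ≠ 0 by decide) hsum2 hw1 (by simp)
      hsg0ne hsg0 hsh0ne hsh0
  have htripg : ∀ s, cf q g s ≠ 0 → s = Em 0 0 ∨ s = Em 1 0 ∨ s = Em 0 1 := by
    intro s hs
    have b0 := hgbd0 s hs
    have b1 := hgbd1 s hs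
    by_cases h10 : s 0 = 1
    · right; left
      have := b0.2 h10
      ext i; fin_cases i <;> simp <;> omega
    · by_cases h01 : s 1 = 1
      · right; right
        have := b1.2 h01
        ext i; fin_cases i <;> simp <;> omega
      · left
        ext i; fin_cases i <;> simp <;> omega
  have htriph : ∀ s, cf q h s ≠ 0 → s = Em 0 0 ∨ s = Em 1 0 ∨ s = Em 0 1 := by
    intro s hs
    have b0 := hhbd0 s hs
    have b1 := hhbd1 s hs
    by_cases h10 : s 0 = 1
    · right; left
      have := b0.2 h10
      ext i; fin_cases i <;> simp <;> omega
    · by_cases h01 : s 1 = 1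
      · right; right
        have := b1.2 h01
        ext i; fin_cases i <;> simp <;> omega
      · left
        ext i; fin_cases i <;> simp <;> omega
  have hAg : cf q g (Em 1 0) ≠ 0 := by
    have : sg = Em 1 0 := by ext i; fin_cases i <;> simp <;> omega
    rwa [this] at hsgcf
  have hBg : cf q g (Em 0 1) ≠ 0 := by
    have : sg' = Em 0 1 := by ext i; fin_cases i <;> simp <;> omega
    rwa [this] at hsgcf'
  have hAh : cf q h (Em 1 0) ≠ 0 := by
    have : sh = Em 1 0 := by ext i; fin_cases i <;> simp <;> omega
    rwa [this] at hshcf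
  have hBh : cf q h (Em 0 1) ≠ 0 := by
    have : sh' = Em 0 1 := by ext i; fin_cases i <;> simp <;> omega
    rwa [this] at hshcf'
  have hgr := triple_repr q htripg
  have hhr := triple_repr q htriph
  rw [hgr, hhr, expandQ] at hf
  have E20 := congrArg (fun z => cf q z (Em 2 0)) hf
  have E11 := congrArg (fun z => cf q z (Em 1 1)) hf
  have E02 := congrArg (fun z => cf q z (Em 0 2)) hf
  simp only [cf_add, cf_smul, cf_one, cf_X, cf_Y, cf_XX, cf_XY, cf_YY, cf_X2, cf_Y2,
    Em_inj, mul_ite, mul_one, mul_zero] at E20 E11 E02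
  norm_num at E20 E11 E02
  refine ⟨cf q g (Em 1 0) * cf q h (Em 0 1) - q * (cf q g (Em 0 1) * cf q h (Em 1 0)), ?_⟩
  rw [E20, E11, E02]
  ring

lemma backward_aux (hq : q ≠ 0) {a b c t : F} (ha : a ≠ 0) (hc : c ≠ 0) (ht : t ≠ 0)
    (heq : a * t ^ 2 - b * t + c * q = 0) :
    IsReducibleQP F q (a • (Qx F q ^ 2) + b • (Qx F q * Qy F q) + c • (Qy F q ^ 2)) := by
  refine ⟨a • Qx F q + (c / t) • Qy F q, Qx F q + t • Qy F q, ?_, ?_, ?_⟩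
  · rintro ⟨r, hr⟩
    have h1 := congrArg (fun z => cf q z (Em 1 0)) hr
    simp only [cf_algebraMap, cf_add, cf_smul, cf_X, cf_Y, Em_inj, mul_ite, mul_one,
      mul_zero] at h1
    norm_num at h1
    exact ha h1.symm
  · rintro ⟨r, hr⟩
    have h1 := congrArg (fun z => cf q z (Em 1 0)) hr
    simp only [cf_algebraMap, cf_add, cf_smul, cf_X, cf_Y, Em_inj, mul_ite, mul_one,
      mul_zero] at h1
    norm_num at h1
  · have hb : a * t + (c / t) * q = b := by
      field_simp
      linear_combination heq
    have hcc : c / t * t = c := div_mul_cancel₀ c ht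
    have hexp : (a • Qx F q + (c / t) • Qy F q) * (Qx F q + t • Qy F q)
        = a • (Qx F q * Qx F q) + (a * t + (c / t) * q) • (Qx F q * Qy F q)
          + ((c / t) * t) • (Qy F q * Qy F q) := by
      simp only [mul_add, add_mul, smul_mul_assoc, mul_smul_comm, smul_smul, rel0, add_smul]
      module
    rw [hexp, hb, hcc, ← pow_two, ← pow_two]

end QAux

theorem stmt_1 (F : Type) [Field F] [CharZero F] (q : F) (hq : q ≠ 0)
    (a b c : F) (ha : a ≠ 0) (hc : c ≠ 0) :
    IsReducibleQP F q
        (a • (Qx F q ^ 2) + b • (Qx F q * Qy F q) + c • (Qy F q ^ 2)) ↔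
      ∃ d : F, d ^ 2 = b ^ 2 - 4 * a * c * q := by
  constructor
  · rintro ⟨g, h, hgc, hhc, hf⟩
    exact QAux.forward_dir q hq ha hc hgc hhc hf
  · rintro ⟨d, hd⟩
    have h4 : (4 : F) * a * c * q ≠ 0 := by
      have h4' : (4 : F) ≠ 0 := by norm_num
      exact mul_ne_zero (mul_ne_zero (mul_ne_zero h4' ha) hc) hq
    have hbd : b + d ≠ 0 := by
      intro hcon
      have hb : b = -d := by linear_combination hcon
      apply h4
      rw [hb] at hd
      linear_combination hd
    have h2a : (2 : F) * a ≠ 0 := mul_ne_zero two_ne_zero ha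
    have ht : (b + d) / (2 * a) ≠ 0 := div_ne_zero hbd h2a
    have heq : a * ((b + d) / (2 * a)) ^ 2 - b * ((b + d) / (2 * a)) + c * q = 0 := by
      field_simp
      linear_combination hd
    exact QAux.backward_aux q hq ha hc ht heq
end
end

section
/- Let F be a field of characteristic zero and let q ∈ F be nonzero. Let σ be the F-algebra endomorphism of the quantum plane O_q(F²) determined by σ(x) = q⁻¹·x and σ(y) = y, and let τ be the F-algebra endomorphism determined by τ(x) = x and τ(y) = q⁻¹·y. If p ∈ O_q(F²) is prime, then there exist scalars λ, μ ∈ F such that σ(p) = λ·p and τ(p) = μ·p. -/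
noncomputable section

lemma qplane_rel (F : Type) [Field F] (q : F) :
    Qy F q * Qx F q = q • (Qx F q * Qy F q) := by
  have := RingQuot.mkAlgHom_rel F (QRel.rel (F := F) (q := q))
  simpa [Qx, Qy, map_mul, map_smul] using this

/-- The `F`-algebra endomorphism `σ` of `O_q(F²)` with `σ(x) = q⁻¹·x`, `σ(y) = y`. -/
def Qσ (F : Type) [Field F] (q : F) : QPlane F q →ₐ[F] QPlane F q :=
  RingQuot.liftAlgHom F
    ⟨FreeAlgebra.lift F ![q⁻¹ • Qx F q, Qy F q], by
      rintro a b ⟨⟩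
      simp only [map_mul, map_smul, FreeAlgebra.lift_ι_apply, Matrix.cons_val_zero,
        Matrix.cons_val_one, Matrix.head_cons]
      rw [mul_smul_comm, smul_mul_assoc, qplane_rel, smul_smul, smul_smul, mul_comm]⟩

/-- The `F`-algebra endomorphism `τ` of `O_q(F²)` with `τ(x) = x`, `τ(y) = q⁻¹·y`. -/
def Qτ (F : Type) [Field F] (q : F) : QPlane F q →ₐ[F] QPlane F q :=
  RingQuot.liftAlgHom F
    ⟨FreeAlgebra.lift F ![Qx F q, q⁻¹ • Qy F q], by
      rintro a b ⟨⟩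
      simp only [map_mul, map_smul, FreeAlgebra.lift_ι_apply, Matrix.cons_val_zero,
        Matrix.cons_val_one, Matrix.head_cons]
      rw [smul_mul_assoc, mul_smul_comm, qplane_rel, smul_smul, smul_smul, mul_comm]⟩


section Dev
variable (F : Type) [Field F] (q : F)

lemma Qσ_x : Qσ F q (Qx F q) = q⁻¹ • Qx F q := by
  simp [Qσ, Qx, RingQuot.liftAlgHom_mkAlgHom_apply, FreeAlgebra.lift_ι_apply]

lemma Qσ_y : Qσ F q (Qy F q) = Qy F q := by
  simp [Qσ, Qy, RingQuot.liftAlgHom_mkAlgHom_apply, FreeAlgebra.lift_ι_apply]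

lemma Qτ_x : Qτ F q (Qx F q) = Qx F q := by
  simp [Qτ, Qx, RingQuot.liftAlgHom_mkAlgHom_apply, FreeAlgebra.lift_ι_apply]

lemma Qτ_y : Qτ F q (Qy F q) = q⁻¹ • Qy F q := by
  simp [Qτ, Qy, RingQuot.liftAlgHom_mkAlgHom_apply, FreeAlgebra.lift_ι_apply]

/-- Induction principle for the quantum plane. -/
lemma QPlane.induction {P : QPlane F q → Prop}
    (halg : ∀ r : F, P (algebraMap F (QPlane F q) r))
    (hx : P (Qx F q)) (hy : P (Qy F q))
    (hmul : ∀ a b, P a → P b → P (a * b))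
    (hadd : ∀ a b, P a → P b → P (a + b)) : ∀ p, P p := by
  intro p
  obtain ⟨a, rfl⟩ := RingQuot.mkAlgHom_surjective F (QRel F q) p
  induction a using FreeAlgebra.induction with
  | grade0 r => rw [AlgHom.commutes]; exact halg r
  | grade1 i =>
      fin_cases i
      · exact hx
      · exact hy
  | mul a b ha hb => rw [map_mul]; exact hmul _ _ ha hb
  | add a b ha hb => rw [map_add]; exact hadd _ _ ha hb

lemma sigma_comm (hq : q ≠ 0) : ∀ p : QPlane F q, Qy F q * Qσ F q p = p * Qy F q := by
  apply QPlane.induction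
  · intro r; rw [AlgHom.commutes]
    exact (Algebra.commutes r (Qy F q)).symm
  · rw [Qσ_x, mul_smul_comm, qplane_rel, smul_smul, inv_mul_cancel₀ hq, one_smul]
  · rw [Qσ_y]
  · intro a b ha hb
    rw [map_mul, ← mul_assoc, ha, mul_assoc, hb, mul_assoc]
  · intro a b ha hb
    rw [map_add, mul_add, ha, hb, add_mul]

lemma tau_comm (hq : q ≠ 0) : ∀ p : QPlane F q, Qτ F q p * Qx F q = Qx F q * p := by
  apply QPlane.induction
  · intro r; rw [AlgHom.commutes]
    exact (Algebra.commutes r (Qx F q))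
  · rw [Qτ_x]
  · rw [Qτ_y, smul_mul_assoc, qplane_rel, smul_smul, inv_mul_cancel₀ hq, one_smul]
  · intro a b ha hb
    rw [map_mul, mul_assoc, hb, ← mul_assoc, ha, mul_assoc]
  · intro a b ha hb
    rw [map_add, add_mul, ha, hb, mul_add]

end Dev

section Dev2
variable (F : Type) [Field F] (q : F)

/-- The monomial `x^i y^j`. -/
def QB (s : ℕ × ℕ) : QPlane F q := Qx F q ^ s.1 * Qy F q ^ s.2

lemma QB_zero : QB F q (0, 0) = 1 := by simp [QB]

lemma qyx_pow1 (j : ℕ) : Qy F q ^ j * Qx F q = q ^ j • (Qx F q * Qy F q ^ j) := by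
  induction j with
  | zero => simp
  | succ j ih =>
      rw [pow_succ, mul_assoc, qplane_rel, mul_smul_comm, ← mul_assoc, ih]
      rw [smul_mul_assoc, smul_smul, ← pow_succ', mul_assoc]

lemma qyx_pow (j k : ℕ) : Qy F q ^ j * Qx F q ^ k = q ^ (j * k) • (Qx F q ^ k * Qy F q ^ j) := by
  induction k with
  | zero => simp
  | succ k ih =>
      rw [pow_succ, ← mul_assoc, ih, smul_mul_assoc, mul_assoc, qyx_pow1, mul_smul_comm,
        smul_smul, ← mul_assoc, ← pow_succ, ← pow_add]
      ring_nf

lemma QB_mul (s t : ℕ × ℕ) :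
    QB F q s * QB F q t = q ^ (s.2 * t.1) • QB F q (s + t) := by
  show (Qx F q ^ s.1 * Qy F q ^ s.2) * (Qx F q ^ t.1 * Qy F q ^ t.2)
      = q ^ (s.2 * t.1) • (Qx F q ^ (s.1 + t.1) * Qy F q ^ (s.2 + t.2))
  rw [mul_assoc, ← mul_assoc (Qy F q ^ s.2), qyx_pow, smul_mul_assoc, mul_smul_comm]
  congr 1
  rw [mul_assoc (Qx F q ^ t.1) (Qy F q ^ s.2) (Qy F q ^ t.2), ← pow_add, ← mul_assoc,
    ← pow_add]

/-- `X` acting on the coefficient module. -/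
def repX : ((ℕ × ℕ) →₀ F) →ₗ[F] ((ℕ × ℕ) →₀ F) :=
  Finsupp.linearCombination F fun s => Finsupp.single (s.1 + 1, s.2) 1

def repY : ((ℕ × ℕ) →₀ F) →ₗ[F] ((ℕ × ℕ) →₀ F) :=
  Finsupp.linearCombination F fun s => q ^ s.1 • Finsupp.single (s.1, s.2 + 1) 1

lemma repX_single (a : ℕ × ℕ) (b : F) :
    repX F (Finsupp.single a b) = Finsupp.single (a.1 + 1, a.2) b := by
  rw [repX, Finsupp.linearCombination_single, Finsupp.smul_single, smul_eq_mul, mul_one]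

lemma repY_single (a : ℕ × ℕ) (b : F) :
    repY F q (Finsupp.single a b) = q ^ a.1 • Finsupp.single (a.1, a.2 + 1) b := by
  rw [repY, Finsupp.linearCombination_single, smul_comm, Finsupp.smul_single, smul_eq_mul,
    mul_one]

lemma rep_rel :
    (repY F q * repX F : Module.End F ((ℕ × ℕ) →₀ F))
      = q • (repX F * repY F q : Module.End F ((ℕ × ℕ) →₀ F)) := by
  apply Finsupp.lhom_ext
  intro a b
  simp only [Module.End.mul_apply, LinearMap.smul_apply, repX_single, repY_single, map_smul]
  rw [smul_smul, ← pow_succ']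

/-- The representation of the quantum plane on `(ℕ×ℕ) →₀ F`. -/
def qrep : QPlane F q →ₐ[F] Module.End F ((ℕ × ℕ) →₀ F) :=
  RingQuot.liftAlgHom F
    ⟨FreeAlgebra.lift F ![repX F, repY F q], by
      rintro a b ⟨⟩
      simp only [map_mul, map_smul, FreeAlgebra.lift_ι_apply, Matrix.cons_val_zero,
        Matrix.cons_val_one, Matrix.head_cons]
      exact rep_rel F q⟩

lemma qrep_x : qrep F q (Qx F q) = repX F := by
  simp [qrep, Qx, RingQuot.liftAlgHom_mkAlgHom_apply, FreeAlgebra.lift_ι_apply]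

lemma qrep_y : qrep F q (Qy F q) = repY F q := by
  simp [qrep, Qy, RingQuot.liftAlgHom_mkAlgHom_apply, FreeAlgebra.lift_ι_apply]

lemma repX_pow (i : ℕ) (a : ℕ × ℕ) (b : F) :
    (repX F ^ i) (Finsupp.single a b) = Finsupp.single (a.1 + i, a.2) b := by
  induction i with
  | zero => simp
  | succ i ih =>
      rw [pow_succ', Module.End.mul_apply, ih, repX_single]
      norm_num [add_assoc]

lemma repY_pow (j m : ℕ) (b : F) :
    (repY F q ^ j) (Finsupp.single (0, m) b) = Finsupp.single (0, m + j) b := by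
  induction j generalizing m with
  | zero => simp
  | succ j ih =>
      rw [pow_succ', Module.End.mul_apply, ih, repY_single]
      simp only [pow_zero, one_smul]
      norm_num [add_assoc]

lemma qrep_QB (s : ℕ × ℕ) :
    qrep F q (QB F q s) (Finsupp.single (0, 0) 1) = Finsupp.single s 1 := by
  rw [QB, map_mul, map_pow, map_pow, qrep_x, qrep_y, Module.End.mul_apply, repY_pow,
    repX_pow]
  norm_num

/-- The linear map sending a coefficient finsupp to the corresponding element. -/
def qlin : ((ℕ × ℕ) →₀ F) →ₗ[F] QPlane F q := Finsupp.linearCombination F (QB F q)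

lemma qrep_qlin (c : (ℕ × ℕ) →₀ F) :
    qrep F q (qlin F q c) (Finsupp.single (0, 0) 1) = c := by
  rw [qlin, Finsupp.linearCombination_apply, map_finsuppSum]
  unfold Finsupp.sum
  rw [LinearMap.sum_apply]
  have : ∀ s ∈ c.support, (qrep F q (c s • QB F q s)) (Finsupp.single (0, 0) 1)
      = Finsupp.single s (c s) := by
    intro s _
    rw [map_smul, LinearMap.smul_apply, qrep_QB, Finsupp.smul_single, smul_eq_mul, mul_one]
  rw [Finset.sum_congr rfl this]
  exact Finsupp.sum_single c

lemma qlin_injective : Function.Injective (qlin F q) := by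
  intro c d h
  rw [← qrep_qlin F q c, ← qrep_qlin F q d, h]

lemma qlin_surjective : Function.Surjective (qlin F q) := by
  intro p
  have hmem : p ∈ LinearMap.range (qlin F q) := by
    induction p using QPlane.induction with
    | halg r =>
        exact ⟨Finsupp.single (0, 0) r, by
          rw [qlin, Finsupp.linearCombination_single, QB_zero, Algebra.algebraMap_eq_smul_one]⟩
    | hx => exact ⟨Finsupp.single (1, 0) 1, by simp [qlin, QB]⟩
    | hy => exact ⟨Finsupp.single (0, 1) 1, by simp [qlin, QB]⟩
    | hmul a b ha hb =>
        obtain ⟨c, rfl⟩ := ha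
        obtain ⟨d, rfl⟩ := hb
        rw [qlin, Finsupp.linearCombination_apply, Finsupp.linearCombination_apply,
          Finsupp.sum_mul]
        apply Submodule.sum_mem
        intro s _
        dsimp only
        rw [Finsupp.mul_sum]
        apply Submodule.sum_mem
        intro t _
        dsimp only
        rw [smul_mul_assoc, mul_smul_comm, QB_mul]
        apply Submodule.smul_mem
        apply Submodule.smul_mem
        apply Submodule.smul_mem
        exact ⟨Finsupp.single (s + t) 1, by
          simp [qlin, Finsupp.linearCombination_single]⟩
    | hadd a b ha hb => exact Submodule.add_mem _ ha hb
  exact hmem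

end Dev2

section Dev3
variable (F : Type) [Field F] (q : F)

/-- The coefficient linear equivalence. -/
def qequiv : ((ℕ × ℕ) →₀ F) ≃ₗ[F] QPlane F q :=
  LinearEquiv.ofBijective (qlin F q) ⟨qlin_injective F q, qlin_surjective F q⟩

/-- Coefficients of an element of the quantum plane in the basis `x^i y^j`. -/
def qcoeff (p : QPlane F q) : (ℕ × ℕ) →₀ F := (qequiv F q).symm p

lemma qlin_qcoeff (p : QPlane F q) : qlin F q (qcoeff F q p) = p :=
  (qequiv F q).apply_symm_apply p

lemma qcoeff_qlin (c : (ℕ × ℕ) →₀ F) : qcoeff F q (qlin F q c) = c :=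
  (qequiv F q).symm_apply_apply c

lemma qcoeff_QB (s : ℕ × ℕ) : qcoeff F q (QB F q s) = Finsupp.single s 1 := by
  have : QB F q s = qlin F q (Finsupp.single s 1) := by
    rw [qlin, Finsupp.linearCombination_single, one_smul]
  rw [this, qcoeff_qlin]

lemma qcoeff_eq_zero_iff (p : QPlane F q) : qcoeff F q p = 0 ↔ p = 0 := by
  constructor
  · intro h
    have := congrArg (qlin F q) h
    rwa [qlin_qcoeff, map_zero] at this
  · rintro rfl
    rw [qcoeff, map_zero]

lemma qcoeff_smul_one (c : F) : qcoeff F q (c • (1 : QPlane F q)) = Finsupp.single (0, 0) c := by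
  rw [qcoeff, map_smul, ← QB_zero, ← qcoeff, qcoeff_QB, Finsupp.smul_single, smul_eq_mul,
    mul_one]

/-- Expansion of a product of two general elements. -/
lemma qcoeff_mul (p r : QPlane F q) (u : ℕ × ℕ) :
    qcoeff F q (p * r) u =
      (qcoeff F q p).sum fun s cs =>
        (qcoeff F q r).sum fun t dt =>
          if s + t = u then cs * dt * q ^ (s.2 * t.1) else 0 := by
  conv_lhs => rw [← qlin_qcoeff F q p, ← qlin_qcoeff F q r]
  set c := qcoeff F q p with hc
  set d := qcoeff F q r with hd
  have expand : qlin F q c * qlin F q d =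
      c.sum fun s cs => d.sum fun t dt => (cs * dt * q ^ (s.2 * t.1)) • QB F q (s + t) := by
    rw [qlin, Finsupp.linearCombination_apply, Finsupp.linearCombination_apply,
      Finsupp.sum_mul]
    apply Finsupp.sum_congr
    intro s _
    rw [Finsupp.mul_sum]
    apply Finsupp.sum_congr
    intro t _
    rw [smul_mul_assoc, mul_smul_comm, QB_mul, smul_smul, smul_smul, mul_assoc]
  rw [expand]
  have hmap : ∀ (cc : (ℕ × ℕ) →₀ F) (g : ℕ × ℕ → F → QPlane F q),
      qcoeff F q (cc.sum g) = cc.sum fun s b => qcoeff F q (g s b) := by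
    intro cc g
    exact map_finsuppSum ((qequiv F q).symm) cc g
  rw [hmap, Finsupp.sum_apply]
  apply Finsupp.sum_congr
  intro s _
  rw [hmap, Finsupp.sum_apply]
  apply Finsupp.sum_congr
  intro t _
  rw [qcoeff, map_smul, ← qcoeff, qcoeff_QB, Finsupp.smul_single, smul_eq_mul, mul_one,
    Finsupp.single_apply]

end Dev3

section Dev4
variable (F : Type) [Field F] (q : F)

lemma lex_add_lt {s a : ℕ × ℕ} (t : ℕ × ℕ) (h : toLex s < toLex a) :
    toLex (s + t) < toLex (a + t) := by
  rw [Prod.Lex.lt_iff] at h ⊢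
  simp only [ofLex_toLex, Prod.fst_add, Prod.snd_add] at *
  omega

lemma lex_add_le {s a t b : ℕ × ℕ} (hs : toLex s ≤ toLex a) (ht : toLex t ≤ toLex b) :
    toLex (s + t) ≤ toLex (a + b) := by
  rw [Prod.Lex.le_iff] at hs ht ⊢
  simp only [ofLex_toLex, Prod.fst_add, Prod.snd_add] at *
  omega

lemma lex_zero_le (u : ℕ × ℕ) : toLex ((0, 0) : ℕ × ℕ) ≤ toLex u := by
  rw [Prod.Lex.le_iff]
  simp only [ofLex_toLex]
  omega

/-- If `s ≤ a`, `t ≤ b` lexicographically and `s + t = a + b` then `s = a` and `t = b`. -/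
lemma lex_ext_unique {s a t b : ℕ × ℕ} (hs : toLex s ≤ toLex a) (ht : toLex t ≤ toLex b)
    (h : s + t = a + b) : s = a ∧ t = b := by
  rcases hs.lt_or_eq with h' | h'
  · exfalso
    have h1 : toLex (s + t) < toLex (a + t) := lex_add_lt t h'
    have h2 : toLex (a + t) ≤ toLex (a + b) := lex_add_le (le_refl _) ht
    rw [h] at h1
    exact absurd (lt_of_lt_of_le h1 h2) (lt_irrefl _)
  · have hsa : s = a := toLex.injective h'
    subst hsa
    exact ⟨rfl, add_left_cancel h⟩

/-- `a` is the lex-largest element of the support of `c`. -/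
def QTop (c : (ℕ × ℕ) →₀ F) (a : ℕ × ℕ) : Prop :=
  c a ≠ 0 ∧ ∀ u, c u ≠ 0 → toLex u ≤ toLex a

/-- `a` is the lex-smallest element of the support of `c`. -/
def QBot (c : (ℕ × ℕ) →₀ F) (a : ℕ × ℕ) : Prop :=
  c a ≠ 0 ∧ ∀ u, c u ≠ 0 → toLex a ≤ toLex u

lemma qTop_unique {c : (ℕ × ℕ) →₀ F} {a b : ℕ × ℕ} (ha : QTop F c a) (hb : QTop F c b) :
    a = b :=
  toLex.injective (le_antisymm (hb.2 a ha.1) (ha.2 b hb.1))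

lemma qBot_unique {c : (ℕ × ℕ) →₀ F} {a b : ℕ × ℕ} (ha : QBot F c a) (hb : QBot F c b) :
    a = b :=
  toLex.injective (le_antisymm (ha.2 b hb.1) (hb.2 a ha.1))

lemma exists_qTop {c : (ℕ × ℕ) →₀ F} (hc : c ≠ 0) : ∃ a, QTop F c a := by
  have hne : c.support.Nonempty := Finsupp.support_nonempty_iff.mpr hc
  have hne' : (c.support.image toLex).Nonempty := hne.image _
  refine ⟨ofLex ((c.support.image toLex).max' hne'), ?_, ?_⟩
  · have := (c.support.image toLex).max'_mem hne'
    obtain ⟨u, hu, hu'⟩ := Finset.mem_image.mp this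
    have : u = ofLex ((c.support.image toLex).max' hne') := by rw [← hu']; rfl
    rw [← this]
    exact Finsupp.mem_support_iff.mp hu
  · intro u hu
    exact (c.support.image toLex).le_max' _ (Finset.mem_image_of_mem _
      (Finsupp.mem_support_iff.mpr hu))

lemma exists_qBot {c : (ℕ × ℕ) →₀ F} (hc : c ≠ 0) : ∃ a, QBot F c a := by
  have hne : c.support.Nonempty := Finsupp.support_nonempty_iff.mpr hc
  have hne' : (c.support.image toLex).Nonempty := hne.image _
  refine ⟨ofLex ((c.support.image toLex).min' hne'), ?_, ?_⟩
  · have := (c.support.image toLex).min'_mem hne'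
    obtain ⟨u, hu, hu'⟩ := Finset.mem_image.mp this
    have : u = ofLex ((c.support.image toLex).min' hne') := by rw [← hu']; rfl
    rw [← this]
    exact Finsupp.mem_support_iff.mp hu
  · intro u hu
    exact (c.support.image toLex).min'_le _ (Finset.mem_image_of_mem _
      (Finsupp.mem_support_iff.mpr hu))

/-- Coefficient of a product at a "uniquely decomposed" point. -/
lemma qcoeff_mul_at {p r : QPlane F q} {a b : ℕ × ℕ}
    (h : ∀ s t, qcoeff F q p s ≠ 0 → qcoeff F q r t ≠ 0 → s + t = a + b → s = a ∧ t = b) :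
    qcoeff F q (p * r) (a + b) = qcoeff F q p a * qcoeff F q r b * q ^ (a.2 * b.1) := by
  rw [qcoeff_mul]
  set c := qcoeff F q p with hc
  set d := qcoeff F q r with hd
  by_cases hca : c a = 0
  · rw [hca, zero_mul, zero_mul]
    rw [Finsupp.sum]
    apply Finset.sum_eq_zero
    intro s hs
    rw [Finsupp.sum]
    apply Finset.sum_eq_zero
    intro t ht
    rw [if_neg]
    intro hst
    have := h s t (Finsupp.mem_support_iff.mp hs) (Finsupp.mem_support_iff.mp ht) hst
    exact (Finsupp.mem_support_iff.mp hs) (this.1 ▸ hca)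
  by_cases hdb : d b = 0
  · rw [hdb, mul_zero, zero_mul]
    rw [Finsupp.sum]
    apply Finset.sum_eq_zero
    intro s hs
    rw [Finsupp.sum]
    apply Finset.sum_eq_zero
    intro t ht
    rw [if_neg]
    intro hst
    have := h s t (Finsupp.mem_support_iff.mp hs) (Finsupp.mem_support_iff.mp ht) hst
    exact (Finsupp.mem_support_iff.mp ht) (this.2 ▸ hdb)
  rw [Finsupp.sum, Finset.sum_eq_single_of_mem a (Finsupp.mem_support_iff.mpr hca)]
  · rw [Finsupp.sum, Finset.sum_eq_single_of_mem b (Finsupp.mem_support_iff.mpr hdb)]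
    · rw [if_pos rfl]
    · intro t ht htb
      rw [if_neg]
      intro hst
      exact htb (add_left_cancel hst)
  · intro s hs hsa
    rw [Finsupp.sum]
    apply Finset.sum_eq_zero
    intro t ht
    rw [if_neg]
    intro hst
    exact hsa (h s t (Finsupp.mem_support_iff.mp hs) (Finsupp.mem_support_iff.mp ht) hst).1

/-- Every point in the support of a product coefficient decomposes. -/
lemma qcoeff_mul_supp {p r : QPlane F q} {u : ℕ × ℕ} (h : qcoeff F q (p * r) u ≠ 0) :
    ∃ s t, qcoeff F q p s ≠ 0 ∧ qcoeff F q r t ≠ 0 ∧ s + t = u := by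
  rw [qcoeff_mul, Finsupp.sum] at h
  obtain ⟨s, hs, hs'⟩ := Finset.exists_ne_zero_of_sum_ne_zero h
  rw [Finsupp.sum] at hs'
  obtain ⟨t, ht, ht'⟩ := Finset.exists_ne_zero_of_sum_ne_zero hs'
  refine ⟨s, t, Finsupp.mem_support_iff.mp hs, Finsupp.mem_support_iff.mp ht, ?_⟩
  by_contra hne
  rw [if_neg hne] at ht'
  exact ht' rfl

lemma qTop_mul (hq : q ≠ 0) {p r : QPlane F q} {a b : ℕ × ℕ}
    (hp : QTop F (qcoeff F q p) a) (hr : QTop F (qcoeff F q r) b) :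
    QTop F (qcoeff F q (p * r)) (a + b) := by
  have huniq : ∀ s t, qcoeff F q p s ≠ 0 → qcoeff F q r t ≠ 0 → s + t = a + b →
      s = a ∧ t = b := fun s t hs ht hst =>
    lex_ext_unique (hp.2 s hs) (hr.2 t ht) hst
  constructor
  · rw [qcoeff_mul_at F q huniq]
    exact mul_ne_zero (mul_ne_zero hp.1 hr.1) (pow_ne_zero _ hq)
  · intro u hu
    obtain ⟨s, t, hs, ht, rfl⟩ := qcoeff_mul_supp F q hu
    exact lex_add_le (hp.2 s hs) (hr.2 t ht)

lemma qBot_mul (hq : q ≠ 0) {p r : QPlane F q} {a b : ℕ × ℕ}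
    (hp : QBot F (qcoeff F q p) a) (hr : QBot F (qcoeff F q r) b) :
    QBot F (qcoeff F q (p * r)) (a + b) := by
  have huniq : ∀ s t, qcoeff F q p s ≠ 0 → qcoeff F q r t ≠ 0 → s + t = a + b →
      s = a ∧ t = b := by
    intro s t hs ht hst
    have := lex_ext_unique (hp.2 s hs) (hr.2 t ht) hst.symm
    exact ⟨this.1.symm, this.2.symm⟩
  constructor
  · rw [qcoeff_mul_at F q huniq]
    exact mul_ne_zero (mul_ne_zero hp.1 hr.1) (pow_ne_zero _ hq)
  · intro u hu
    obtain ⟨s, t, hs, ht, rfl⟩ := qcoeff_mul_supp F q hu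
    exact lex_add_le (hp.2 s hs) (hr.2 t ht)

end Dev4

/-- `r` divides `s` if `s = r·t` or `s = t·r` for some `t`. -/
def EltDvd {R : Type} [Ring R] (r s : R) : Prop :=
  ∃ t : R, s = r * t ∨ s = t * r

/-- `r` is prime if `r ∣ s·t` implies `r ∣ s` or `r ∣ t`. -/
def IsPrimeElt {R : Type} [Ring R] (r : R) : Prop :=
  ∀ s t : R, EltDvd r (s * t) → EltDvd r s ∨ EltDvd r t


section Dev5
variable (F : Type) [Field F] (q : F)

lemma qcoeff_sum (cc : (ℕ × ℕ) →₀ F) (g : ℕ × ℕ → F → QPlane F q) :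
    qcoeff F q (cc.sum g) = cc.sum fun s b => qcoeff F q (g s b) :=
  map_finsuppSum ((qequiv F q).symm) cc g

lemma Qσ_QB (s : ℕ × ℕ) : Qσ F q (QB F q s) = q⁻¹ ^ s.1 • QB F q s := by
  rw [QB, map_mul, map_pow, map_pow, Qσ_x, Qσ_y, smul_pow, smul_mul_assoc]

lemma Qτ_QB (s : ℕ × ℕ) : Qτ F q (QB F q s) = q⁻¹ ^ s.2 • QB F q s := by
  rw [QB, map_mul, map_pow, map_pow, Qτ_x, Qτ_y, smul_pow, mul_smul_comm]

lemma qcoeff_sigma (p : QPlane F q) (u : ℕ × ℕ) :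
    qcoeff F q (Qσ F q p) u = q⁻¹ ^ u.1 * qcoeff F q p u := by
  conv_lhs => rw [← qlin_qcoeff F q p]
  set c := qcoeff F q p with hc
  rw [qlin, Finsupp.linearCombination_apply, map_finsuppSum, qcoeff_sum, Finsupp.sum_apply]
  have hterm : ∀ s b, qcoeff F q (Qσ F q (b • QB F q s)) u
      = if s = u then q⁻¹ ^ u.1 * b else 0 := by
    intro s b
    rw [map_smul, Qσ_QB, qcoeff, map_smul, map_smul, ← qcoeff, qcoeff_QB]
    rw [Finsupp.smul_apply, Finsupp.smul_apply, Finsupp.single_apply]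
    by_cases h : s = u
    · subst h
      simp [mul_comm]
    · simp [if_neg h]
  rw [show (c.sum fun s b => (qcoeff F q ((Qσ F q) (b • QB F q s))) u)
      = c.sum fun s b => if s = u then q⁻¹ ^ u.1 * b else 0 from
    Finsupp.sum_congr fun s _ => hterm s (c s), Finsupp.sum_ite_eq']
  by_cases h : u ∈ c.support
  · rw [if_pos h]
  · rw [if_neg h, Finsupp.notMem_support_iff.mp h, mul_zero]

lemma qcoeff_tau (p : QPlane F q) (u : ℕ × ℕ) :
    qcoeff F q (Qτ F q p) u = q⁻¹ ^ u.2 * qcoeff F q p u := by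
  conv_lhs => rw [← qlin_qcoeff F q p]
  set c := qcoeff F q p with hc
  rw [qlin, Finsupp.linearCombination_apply, map_finsuppSum, qcoeff_sum, Finsupp.sum_apply]
  have hterm : ∀ s b, qcoeff F q (Qτ F q (b • QB F q s)) u
      = if s = u then q⁻¹ ^ u.2 * b else 0 := by
    intro s b
    rw [map_smul, Qτ_QB, qcoeff, map_smul, map_smul, ← qcoeff, qcoeff_QB]
    rw [Finsupp.smul_apply, Finsupp.smul_apply, Finsupp.single_apply]
    by_cases h : s = u
    · subst h
      simp [mul_comm]
    · simp [if_neg h]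
  rw [show (c.sum fun s b => (qcoeff F q ((Qτ F q) (b • QB F q s))) u)
      = c.sum fun s b => if s = u then q⁻¹ ^ u.2 * b else 0 from
    Finsupp.sum_congr fun s _ => hterm s (c s), Finsupp.sum_ite_eq']
  by_cases h : u ∈ c.support
  · rw [if_pos h]
  · rw [if_neg h, Finsupp.notMem_support_iff.mp h, mul_zero]

lemma eq_smul_QB {p : QPlane F q} {a : ℕ × ℕ} (h : ∀ u, qcoeff F q p u ≠ 0 → u = a) :
    p = qcoeff F q p a • QB F q a := by
  have hs : (qcoeff F q p).support ⊆ {a} := fun u hu =>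
    Finset.mem_singleton.mpr (h u (Finsupp.mem_support_iff.mp hu))
  have h2 : qcoeff F q p = Finsupp.single a (qcoeff F q p a) :=
    Finsupp.support_subset_singleton.mp hs
  conv_lhs => rw [← qlin_qcoeff F q p, h2]
  rw [qlin, Finsupp.linearCombination_single]

lemma qcoeff_ne_zero_of_ne_zero {p : QPlane F q} (hp : p ≠ 0) : qcoeff F q p ≠ 0 :=
  fun h => hp ((qcoeff_eq_zero_iff F q p).mp h)

lemma scalar_of_dvd (hq : q ≠ 0) {p w : QPlane F q} (hp0 : p ≠ 0)
    (hw : ∀ u, qcoeff F q w u ≠ 0 ↔ qcoeff F q p u ≠ 0) (hd : EltDvd p w) :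
    ∃ lam : F, w = lam • p := by
  obtain ⟨a, ha⟩ := exists_qTop F (qcoeff_ne_zero_of_ne_zero F q hp0)
  have hwa : QTop F (qcoeff F q w) a := ⟨(hw a).mpr ha.1, fun u hu => ha.2 u ((hw u).mp hu)⟩
  have hw0 : w ≠ 0 := by
    intro h
    apply hwa.1
    rw [(qcoeff_eq_zero_iff F q w).mpr h]
    rfl
  obtain ⟨t, ht | ht⟩ := hd
  · have ht0 : t ≠ 0 := fun h0 => hw0 (by rw [ht, h0, mul_zero])
    obtain ⟨b, hb⟩ := exists_qTop F (qcoeff_ne_zero_of_ne_zero F q ht0)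
    have htop := qTop_mul F q hq ha hb
    rw [← ht] at htop
    have hab : a + b = a := qTop_unique F htop hwa
    have hb0 : b = (0, 0) := by
      have h1 := congrArg Prod.fst hab
      have h2 := congrArg Prod.snd hab
      simp only [Prod.fst_add, Prod.snd_add] at h1 h2
      exact Prod.ext_iff.mpr ⟨by omega, by omega⟩
    have huniq : ∀ u, qcoeff F q t u ≠ 0 → u = (0, 0) := by
      intro u hu
      have h1 := hb.2 u hu
      rw [hb0] at h1
      exact toLex.injective (le_antisymm h1 (lex_zero_le u))
    have hts : t = qcoeff F q t (0, 0) • QB F q (0, 0) := eq_smul_QB F q huniq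
    refine ⟨qcoeff F q t (0, 0), ?_⟩
    conv_lhs => rw [ht, hts]
    rw [QB_zero, mul_smul_comm, mul_one]
  · have ht0 : t ≠ 0 := fun h0 => hw0 (by rw [ht, h0, zero_mul])
    obtain ⟨b, hb⟩ := exists_qTop F (qcoeff_ne_zero_of_ne_zero F q ht0)
    have htop := qTop_mul F q hq hb ha
    rw [← ht] at htop
    have hab : b + a = a := qTop_unique F htop hwa
    have hb0 : b = (0, 0) := by
      have h1 := congrArg Prod.fst hab
      have h2 := congrArg Prod.snd hab
      simp only [Prod.fst_add, Prod.snd_add] at h1 h2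
      exact Prod.ext_iff.mpr ⟨by omega, by omega⟩
    have huniq : ∀ u, qcoeff F q t u ≠ 0 → u = (0, 0) := by
      intro u hu
      have h1 := hb.2 u hu
      rw [hb0] at h1
      exact toLex.injective (le_antisymm h1 (lex_zero_le u))
    have hts : t = qcoeff F q t (0, 0) • QB F q (0, 0) := eq_smul_QB F q huniq
    refine ⟨qcoeff F q t (0, 0), ?_⟩
    conv_lhs => rw [ht, hts]
    rw [QB_zero, smul_mul_assoc, one_mul]

lemma eigen_of_dvd_monomial (hq : q ≠ 0) {p : QPlane F q} (hp0 : p ≠ 0) (w : ℕ × ℕ)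
    (hd : EltDvd p (QB F q w)) :
    ∃ a : ℕ × ℕ, p = qcoeff F q p a • QB F q a := by
  have hsingle : ∀ u : ℕ × ℕ, (Finsupp.single w (1 : F)) u ≠ 0 → u = w := by
    intro u hu
    by_contra h
    rw [Finsupp.single_apply, if_neg fun hh => h hh.symm] at hu
    exact hu rfl
  have hQBtop : QTop F (qcoeff F q (QB F q w)) w := by
    rw [qcoeff_QB]
    exact ⟨by simp, fun u hu => le_of_eq (congrArg toLex (hsingle u hu))⟩
  have hQBbot : QBot F (qcoeff F q (QB F q w)) w := by
    rw [qcoeff_QB]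
    exact ⟨by simp, fun u hu => le_of_eq (congrArg toLex (hsingle u hu)).symm⟩
  obtain ⟨a, ha⟩ := exists_qTop F (qcoeff_ne_zero_of_ne_zero F q hp0)
  obtain ⟨a₂, ha₂⟩ := exists_qBot F (qcoeff_ne_zero_of_ne_zero F q hp0)
  have hQB0 : QB F q w ≠ 0 := by
    intro h
    apply hQBtop.1
    rw [h, (qcoeff_eq_zero_iff F q 0).mpr rfl]
    rfl
  obtain ⟨t, ht | ht⟩ := hd
  · have ht0 : t ≠ 0 := fun h0 => hQB0 (by rw [ht, h0, mul_zero])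
    obtain ⟨b, hb⟩ := exists_qTop F (qcoeff_ne_zero_of_ne_zero F q ht0)
    obtain ⟨b₂, hb₂⟩ := exists_qBot F (qcoeff_ne_zero_of_ne_zero F q ht0)
    have htop := qTop_mul F q hq ha hb
    have hbot := qBot_mul F q hq ha₂ hb₂
    rw [← ht] at htop hbot
    have hab : a + b = w := qTop_unique F htop hQBtop
    have hab₂ : a₂ + b₂ = w := qBot_unique F hbot hQBbot
    have heq : a₂ = a := (lex_ext_unique (ha.2 a₂ ha₂.1) (hb.2 b₂ hb₂.1)
      (by rw [hab₂, hab])).1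
    refine ⟨a, eq_smul_QB F q ?_⟩
    intro u hu
    have h1 := ha.2 u hu
    have h2 := ha₂.2 u hu
    rw [heq] at h2
    exact toLex.injective (le_antisymm h1 h2)
  · have ht0 : t ≠ 0 := fun h0 => hQB0 (by rw [ht, h0, zero_mul])
    obtain ⟨b, hb⟩ := exists_qTop F (qcoeff_ne_zero_of_ne_zero F q ht0)
    obtain ⟨b₂, hb₂⟩ := exists_qBot F (qcoeff_ne_zero_of_ne_zero F q ht0)
    have htop := qTop_mul F q hq hb ha
    have hbot := qBot_mul F q hq hb₂ ha₂
    rw [← ht] at htop hbot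
    have hab : b + a = w := qTop_unique F htop hQBtop
    have hab₂ : b₂ + a₂ = w := qBot_unique F hbot hQBbot
    have heq : a₂ = a := (lex_ext_unique (hb.2 b₂ hb₂.1) (ha.2 a₂ ha₂.1)
      (by rw [hab₂, hab])).2
    refine ⟨a, eq_smul_QB F q ?_⟩
    intro u hu
    have h1 := ha.2 u hu
    have h2 := ha₂.2 u hu
    rw [heq] at h2
    exact toLex.injective (le_antisymm h1 h2)

end Dev5


theorem stmt_8 (F : Type) [Field F] [CharZero F] (q : F) (hq : q ≠ 0)
    (p : QPlane F q) (hp : IsPrimeElt p) :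
    ∃ lam mu : F, Qσ F q p = lam • p ∧ Qτ F q p = mu • p := by
  by_cases hp0 : p = 0
  · exact ⟨1, 1, by simp [hp0]⟩
  have hmono : ∀ w : ℕ × ℕ, EltDvd p (QB F q w) →
      ∃ lam mu : F, Qσ F q p = lam • p ∧ Qτ F q p = mu • p := by
    intro w hd
    obtain ⟨a, hpa⟩ := eigen_of_dvd_monomial F q hq hp0 w hd
    refine ⟨q⁻¹ ^ a.1, q⁻¹ ^ a.2, ?_, ?_⟩
    · conv_lhs => rw [hpa]
      conv_rhs => rw [hpa]
      rw [map_smul, Qσ_QB, smul_comm]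
    · conv_lhs => rw [hpa]
      conv_rhs => rw [hpa]
      rw [map_smul, Qτ_QB, smul_comm]
  have h1 : EltDvd p (Qy F q) ∨ EltDvd p (Qσ F q p) :=
    hp _ _ ⟨Qy F q, Or.inl (sigma_comm F q hq p)⟩
  have h2 : EltDvd p (Qτ F q p) ∨ EltDvd p (Qx F q) :=
    hp _ _ ⟨Qx F q, Or.inr (tau_comm F q hq p)⟩
  have hσsupp : ∀ u, qcoeff F q (Qσ F q p) u ≠ 0 ↔ qcoeff F q p u ≠ 0 := by
    intro u
    rw [qcoeff_sigma]
    constructor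
    · intro h h'
      rw [h', mul_zero] at h
      exact h rfl
    · intro h
      exact mul_ne_zero (pow_ne_zero _ (inv_ne_zero hq)) h
  have hτsupp : ∀ u, qcoeff F q (Qτ F q p) u ≠ 0 ↔ qcoeff F q p u ≠ 0 := by
    intro u
    rw [qcoeff_tau]
    constructor
    · intro h h'
      rw [h', mul_zero] at h
      exact h rfl
    · intro h
      exact mul_ne_zero (pow_ne_zero _ (inv_ne_zero hq)) h
  rcases h1 with h1 | h1
  · have hy : Qy F q = QB F q (0, 1) := by simp [QB]
    exact hmono (0, 1) (hy ▸ h1)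
  obtain ⟨lam, hlam⟩ := scalar_of_dvd F q hq hp0 hσsupp h1
  rcases h2 with h2 | h2
  · obtain ⟨mu, hmu⟩ := scalar_of_dvd F q hq hp0 hτsupp h2
    exact ⟨lam, mu, hlam, hmu⟩
  · have hx : Qx F q = QB F q (1, 0) := by simp [QB]
    exact hmono (1, 0) (hx ▸ h2)
end
end

section
/- Let F be a field of characteristic zero and let q ∈ F be nonzero. Assume q is not a root of unity (i.e., q^n ≠ 1 for every integer n ≥ 1). If p is a nonconstant prime element of the quantum plane O_q(F²), then p is a scalar multiple of x or a scalar multiple of y, i.e., there exists λ ∈ F with p = λ·x or p = λ·y. -/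
noncomputable section

namespace QP

variable (F : Type) [Field F] (q : F)

lemma qrel : Qy F q * Qx F q = q • (Qx F q * Qy F q) := by
  have := RingQuot.mkAlgHom_rel F (QRel.rel (F := F) (q := q))
  simpa [Qx, Qy, map_mul] using this

lemma ypow_x (b : ℕ) : Qy F q ^ b * Qx F q = q ^ b • (Qx F q * Qy F q ^ b) := by
  induction b with
  | zero => simp
  | succ n ih =>
      rw [pow_succ, mul_assoc, qrel, mul_smul_comm, ← mul_assoc, ih, smul_mul_assoc,
        smul_smul, mul_assoc, ← pow_succ, ← pow_succ']

lemma ypow_xpow (b c : ℕ) :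
    Qy F q ^ b * Qx F q ^ c = q ^ (b * c) • (Qx F q ^ c * Qy F q ^ b) := by
  induction c with
  | zero => simp
  | succ n ih =>
      rw [pow_succ, ← mul_assoc, ih, smul_mul_assoc, mul_assoc, ypow_x, mul_smul_comm,
        smul_smul, ← pow_add]
      congr 1
      rw [← mul_assoc]

def mono (p : ℕ × ℕ) : QPlane F q := Qx F q ^ p.1 * Qy F q ^ p.2

lemma mono_mul (p r : ℕ × ℕ) :
    mono F q p * mono F q r = q ^ (p.2 * r.1) • mono F q (p + r) := by
  obtain ⟨a, b⟩ := p; obtain ⟨c, d⟩ := r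
  simp only [mono, Prod.mk_add_mk]
  rw [mul_assoc, ← mul_assoc (Qy F q ^ b), ypow_xpow, smul_mul_assoc, mul_smul_comm]
  rw [mul_assoc (Qx F q ^ c), ← pow_add, ← mul_assoc, ← pow_add]

end QP

noncomputable section
namespace QP
open Polynomial

variable (F : Type) [Field F] (q : F)

/-- multiplication by X on F[t] -/
def mX : Module.End F (Polynomial F) := LinearMap.mulLeft F (Polynomial.X)

/-- dilation t ↦ q t on F[t] -/
def dil : Module.End F (Polynomial F) := (Polynomial.aeval (Polynomial.C q * Polynomial.X)).toLinearMap

lemma dil_mX : dil F q * mX F = q • (mX F * dil F q) := by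
  refine LinearMap.ext fun f => ?_
  simp only [Module.End.mul_apply, LinearMap.smul_apply, mX, dil, LinearMap.mulLeft_apply,
    AlgHom.toLinearMap_apply, map_mul, Polynomial.aeval_X]
  rw [Polynomial.smul_eq_C_mul]
  ring

def rho : QPlane F q →ₐ[F] Module.End F (Polynomial F) :=
  RingQuot.liftAlgHom F ⟨FreeAlgebra.lift F ![mX F, dil F q], by
    rintro _ _ ⟨⟩
    simp only [map_mul, map_smul, FreeAlgebra.lift_ι_apply]
    show dil F q * mX F = q • (mX F * dil F q)
    exact dil_mX F q⟩

lemma rho_x : rho F q (Qx F q) = mX F := by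
  rw [rho, Qx, RingQuot.liftAlgHom_mkAlgHom_apply, FreeAlgebra.lift_ι_apply]
  rfl

lemma rho_y : rho F q (Qy F q) = dil F q := by
  rw [rho, Qy, RingQuot.liftAlgHom_mkAlgHom_apply, FreeAlgebra.lift_ι_apply]
  rfl

lemma dil_pow_apply (j m : ℕ) :
    (dil F q ^ j) (Polynomial.X ^ m) = q ^ (j * m) • Polynomial.X ^ m := by
  induction j with
  | zero => simp
  | succ n ih =>
      rw [pow_succ, Module.End.mul_apply]
      have h1 : (dil F q) (Polynomial.X ^ m : Polynomial F) = q ^ m • Polynomial.X ^ m := by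
        simp only [dil, AlgHom.toLinearMap_apply, map_pow, Polynomial.aeval_X, mul_pow]
        rw [← Polynomial.C_pow, Polynomial.smul_eq_C_mul]
      rw [h1, map_smul, ih, smul_smul, ← pow_add]
      congr 2
      ring

lemma rho_mono_apply (p : ℕ × ℕ) (m : ℕ) :
    rho F q (mono F q p) (Polynomial.X ^ m) = q ^ (p.2 * m) • Polynomial.X ^ (p.1 + m) := by
  obtain ⟨a, b⟩ := p
  simp only [mono, map_mul, map_pow, rho_x, rho_y, Module.End.mul_apply]
  rw [dil_pow_apply, map_smul]
  congr 1
  simp only [mX, LinearMap.pow_mulLeft, LinearMap.mulLeft_apply, ← pow_add]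

def psi : ((ℕ × ℕ) →₀ F) →ₗ[F] QPlane F q := Finsupp.linearCombination F (mono F q)

lemma psi_single (p : ℕ × ℕ) (c : F) :
    psi F q (Finsupp.single p c) = c • mono F q p := by
  simp [psi, Finsupp.linearCombination_single]

lemma psi_apply (f : (ℕ × ℕ) →₀ F) : psi F q f = f.sum fun p c => c • mono F q p := rfl

end QP

noncomputable section
namespace QP
open Polynomial

variable (F : Type) [Field F] (q : F)

lemma pow_inj (hq : q ≠ 0) (hroot : ∀ n : ℕ, 1 ≤ n → q ^ n ≠ 1) :
    Function.Injective fun m : ℕ => q ^ m := by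
  have key : ∀ a b : ℕ, a < b → q ^ a = q ^ b → False := by
    intro a b hab h
    have h1 : q ^ a * 1 = q ^ a * q ^ (b - a) := by
      rw [mul_one, ← pow_add]
      rw [h]; congr 1; omega
    have h2 : (1 : F) = q ^ (b - a) := mul_left_cancel₀ (pow_ne_zero a hq) h1
    exact hroot (b - a) (by omega) h2.symm
  intro a b hab
  rcases lt_trichotomy a b with h | h | h
  · exact absurd (key a b h hab) id
  · exact h
  · exact absurd (key b a h hab.symm) id

lemma psi_eval (f : (ℕ × ℕ) →₀ F) (m : ℕ) :
    rho F q (psi F q f) (Polynomial.X ^ m)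
      = f.support.sum fun p => (f p * q ^ (p.2 * m)) • Polynomial.X ^ (p.1 + m) := by
  rw [psi_apply, Finsupp.sum, map_sum]
  rw [LinearMap.coe_sum, Finset.sum_apply]
  refine Finset.sum_congr rfl fun p _ => ?_
  rw [map_smul, LinearMap.smul_apply, rho_mono_apply, smul_smul]

lemma psi_key {f : (ℕ × ℕ) →₀ F} (hf : psi F q f = 0) (i m : ℕ) :
    (f.support.sum fun p => if p.1 = i then f p * q ^ (p.2 * m) else 0) = 0 := by
  have h := psi_eval F q f m
  rw [hf, map_zero, LinearMap.zero_apply] at h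
  have h2 := congrArg (fun P => Polynomial.coeff P (i + m)) h.symm
  simp only [Polynomial.finset_sum_coeff, Polynomial.coeff_smul, Polynomial.coeff_X_pow,
    Polynomial.coeff_zero, smul_eq_mul] at h2
  calc (f.support.sum fun p => if p.1 = i then f p * q ^ (p.2 * m) else 0)
      = f.support.sum fun p => f p * q ^ (p.2 * m) * if i + m = p.1 + m then 1 else 0 := by
        refine Finset.sum_congr rfl fun p _ => ?_
        by_cases hpi : p.1 = i
        · simp [hpi]
        · have hne : ¬ (i + m = p.1 + m) := by omega
          simp [hpi, hne, Ne.symm hpi]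
    _ = 0 := h2

lemma psi_injective (hq : q ≠ 0) (hroot : ∀ n : ℕ, 1 ≤ n → q ^ n ≠ 1) :
    Function.Injective (psi F q) := by
  have main : ∀ f : (ℕ × ℕ) →₀ F, psi F q f = 0 → f = 0 := by
    intro f hf
    ext pij
    obtain ⟨i, j⟩ := pij
    set P : Polynomial F :=
      f.support.sum fun p => if p.1 = i then Polynomial.C (f p) * Polynomial.X ^ p.2 else 0 with hP
    have hev : ∀ m : ℕ, P.eval (q ^ m) = 0 := by
      intro m
      rw [hP, Polynomial.eval_finset_sum, ← psi_key F q hf i m]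
      refine Finset.sum_congr rfl fun p _ => ?_
      by_cases hpi : p.1 = i
      · simp only [hpi, if_true, Polynomial.eval_mul, Polynomial.eval_C, Polynomial.eval_pow,
          Polynomial.eval_X]
        rw [mul_comm p.2 m, pow_mul]
      · simp [hpi]
    have hP0 : P = 0 := by
      refine Polynomial.eq_zero_of_infinite_isRoot P ?_
      refine Set.infinite_of_injective_forall_mem (pow_inj F q hq hroot) fun m => ?_
      exact hev m
    have hco : P.coeff j = f (i, j) := by
      rw [hP, Polynomial.finset_sum_coeff]
      have : ∀ p ∈ f.support,
          (if p.1 = i then Polynomial.C (f p) * Polynomial.X ^ p.2 else 0).coeff j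
            = if p = (i, j) then f p else 0 := by
        intro p _
        by_cases h1 : p.1 = i
        · by_cases h2 : p.2 = j
          · simp [h1, h2, Polynomial.coeff_C_mul, Polynomial.coeff_X_pow, Prod.ext_iff]
          · simp [h1, h2, Polynomial.coeff_C_mul, Polynomial.coeff_X_pow, Prod.ext_iff,
              Ne.symm h2]
        · simp [h1, Prod.ext_iff]
      rw [Finset.sum_congr rfl this, Finset.sum_ite_eq' f.support (i, j) f]
      by_cases hmem : (i, j) ∈ f.support
      · simp [hmem]
      · simp only [hmem, if_false]
        exact (Finsupp.notMem_support_iff.mp hmem).symm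
    rw [hP0] at hco
    simpa using hco.symm
  intro f g hfg
  have : psi F q (f - g) = 0 := by rw [map_sub, hfg, sub_self]
  have := main _ this
  exact sub_eq_zero.mp this

end QP

noncomputable section
namespace QP
open Finsupp

variable (F : Type) [Field F] (q : F)

def conv (f g : (ℕ × ℕ) →₀ F) : (ℕ × ℕ) →₀ F :=
  f.sum fun p c => g.sum fun r d => Finsupp.single (p + r) (c * d * q ^ (p.2 * r.1))

lemma psi_mul (f g : (ℕ × ℕ) →₀ F) :
    psi F q f * psi F q g = psi F q (conv F q f g) := by
  rw [conv, map_finsuppSum, Finsupp.sum, psi_apply F q f, Finsupp.sum, Finset.sum_mul]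
  refine Finset.sum_congr rfl fun p _ => ?_
  beta_reduce
  rw [map_finsuppSum, Finsupp.sum, psi_apply F q g, Finsupp.sum, Finset.mul_sum]
  refine Finset.sum_congr rfl fun r _ => ?_
  beta_reduce
  rw [psi_single, smul_mul_assoc, mul_smul_comm, mono_mul, smul_smul, smul_smul]

-- lex helper lemmas
lemma lex_le_zero {p : ℕ × ℕ} (h : toLex p ≤ toLex ((0, 0) : ℕ × ℕ)) : p = (0, 0) := by
  rw [Prod.Lex.toLex_le_toLex] at h
  obtain ⟨a, b⟩ := p
  simp only at h
  simp only [Prod.mk.injEq]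
  omega

lemma lex_fst_le {p P : ℕ × ℕ} (h : toLex p ≤ toLex P) : p.1 ≤ P.1 := by
  rw [Prod.Lex.toLex_le_toLex] at h
  omega

lemma lex_add_le {p P r R : ℕ × ℕ} (h1 : toLex p ≤ toLex P) (h2 : toLex r ≤ toLex R) :
    toLex (p + r) ≤ toLex (P + R) := by
  rw [Prod.Lex.toLex_le_toLex] at h1 h2 ⊢
  simp only [Prod.fst_add, Prod.snd_add]
  omega

lemma lex_top_unique {p P r R : ℕ × ℕ} (h1 : toLex p ≤ toLex P) (h2 : toLex r ≤ toLex R)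
    (h : p + r = P + R) : p = P ∧ r = R := by
  rw [Prod.Lex.toLex_le_toLex] at h1 h2
  rw [Prod.ext_iff] at h
  simp only [Prod.fst_add, Prod.snd_add] at h
  have hc : p.1 = P.1 ∧ p.2 = P.2 ∧ r.1 = R.1 ∧ r.2 = R.2 := by omega
  exact ⟨Prod.ext_iff.mpr ⟨hc.1, hc.2.1⟩, Prod.ext_iff.mpr ⟨hc.2.2.1, hc.2.2.2⟩⟩

lemma conv_apply_top (f g : (ℕ × ℕ) →₀ F) (Mf Mg : ℕ × ℕ)
    (hMf : ∀ p ∈ f.support, toLex p ≤ toLex Mf)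
    (hMg : ∀ r ∈ g.support, toLex r ≤ toLex Mg) :
    conv F q f g (Mf + Mg) = f Mf * g Mg * q ^ (Mf.2 * Mg.1) := by
  rw [conv, Finsupp.sum, Finsupp.finset_sum_apply]
  have step : ∀ p ∈ f.support,
      ((g.sum fun r d => Finsupp.single (p + r) (f p * d * q ^ (p.2 * r.1))) (Mf + Mg))
        = if p = Mf then (if Mg ∈ g.support then f p * g Mg * q ^ (p.2 * Mg.1) else 0) else 0 := by
    intro p hp
    rw [Finsupp.sum, Finsupp.finset_sum_apply]
    have : ∀ r ∈ g.support,
        (Finsupp.single (p + r) (f p * g r * q ^ (p.2 * r.1))) (Mf + Mg)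
          = if p = Mf then (if r = Mg then f p * g r * q ^ (p.2 * r.1) else 0) else 0 := by
      intro r hr
      rw [Finsupp.single_apply]
      by_cases he : p + r = Mf + Mg
      · obtain ⟨h1, h2⟩ := lex_top_unique (hMf p hp) (hMg r hr) he
        simp [he, h1, h2]
      · have : ¬(p = Mf ∧ r = Mg) := by rintro ⟨rfl, rfl⟩; exact he rfl
        by_cases h1 : p = Mf
        · have h2 : ¬ r = Mg := fun h2 => this ⟨h1, h2⟩
          simp [he, h1, h2]
        · simp [he, h1]
    rw [Finset.sum_congr rfl this]
    by_cases h1 : p = Mf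
    · simp only [h1, if_true]
      rw [Finset.sum_ite_eq' g.support Mg]
    · simp [h1]
  rw [Finset.sum_congr rfl step, Finset.sum_ite_eq' f.support Mf]
  by_cases h1 : Mf ∈ f.support
  · by_cases h2 : Mg ∈ g.support
    · simp [h1, h2]
    · simp [h1, h2, Finsupp.notMem_support_iff.mp h2]
  · simp [h1, Finsupp.notMem_support_iff.mp h1]

lemma conv_support {f g : (ℕ × ℕ) →₀ F} {s : ℕ × ℕ} (hs : s ∈ (conv F q f g).support) :
    ∃ p ∈ f.support, ∃ r ∈ g.support, s = p + r := by
  rw [conv] at hs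
  have h1 := Finsupp.support_sum hs
  rw [Finset.mem_biUnion] at h1
  obtain ⟨p, hp, hs2⟩ := h1
  have h2 := Finsupp.support_sum hs2
  rw [Finset.mem_biUnion] at h2
  obtain ⟨r, hr, hs3⟩ := h2
  have h3 := Finsupp.support_single_subset hs3
  rw [Finset.mem_singleton] at h3
  exact ⟨p, hp, r, hr, h3⟩

lemma conv_top (hq : q ≠ 0) {f g : (ℕ × ℕ) →₀ F} (hf : f ≠ 0) (hg : g ≠ 0) :
    ∃ Mf ∈ f.support, ∃ Mg ∈ g.support,
      (∀ p ∈ f.support, toLex p ≤ toLex Mf) ∧ (∀ r ∈ g.support, toLex r ≤ toLex Mg) ∧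
      conv F q f g (Mf + Mg) ≠ 0 ∧
      (∀ s ∈ (conv F q f g).support, toLex s ≤ toLex (Mf + Mg)) := by
  obtain ⟨Mf, hMf, hMf2⟩ := Finset.exists_max_image f.support toLex
    (Finsupp.support_nonempty_iff.mpr hf)
  obtain ⟨Mg, hMg, hMg2⟩ := Finset.exists_max_image g.support toLex
    (Finsupp.support_nonempty_iff.mpr hg)
  refine ⟨Mf, hMf, Mg, hMg, hMf2, hMg2, ?_, ?_⟩
  · rw [conv_apply_top F q f g Mf Mg hMf2 hMg2]
    exact mul_ne_zero (mul_ne_zero (Finsupp.mem_support_iff.mp hMf)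
      (Finsupp.mem_support_iff.mp hMg)) (pow_ne_zero _ hq)
  · intro s hs
    obtain ⟨p, hp, r, hr, rfl⟩ := conv_support F q hs
    exact lex_add_le (hMf2 p hp) (hMg2 r hr)

lemma conv_single_zero_right (f : (ℕ × ℕ) →₀ F) (c : F) :
    conv F q f (Finsupp.single (0, 0) c) = c • f := by
  ext s
  rw [conv]
  have step : ∀ p : ℕ × ℕ, ∀ cp : F,
      ((Finsupp.single ((0, 0) : ℕ × ℕ) c).sum fun r d =>
        Finsupp.single (p + r) (cp * d * q ^ (p.2 * r.1))) = Finsupp.single p (cp * c) := by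
    intro p cp
    rw [Finsupp.sum_single_index (by simp)]
    simp [show ((0, 0) : ℕ × ℕ) = 0 from rfl]
  simp only [step]
  rw [Finsupp.sum, Finsupp.finset_sum_apply]
  simp only [Finsupp.single_apply]
  rw [Finset.sum_ite_eq' f.support s]
  by_cases h : s ∈ f.support
  · simp [h, mul_comm]
  · simp [h, Finsupp.notMem_support_iff.mp h]

lemma conv_single_zero_left (f : (ℕ × ℕ) →₀ F) (c : F) :
    conv F q (Finsupp.single (0, 0) c) f = c • f := by
  rw [conv, Finsupp.sum_single_index (by simp [Finsupp.sum])]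
  simp only [show ((0, 0) : ℕ × ℕ) = 0 from rfl, zero_add, Prod.snd_zero, zero_mul, pow_zero,
    mul_one]
  ext s
  rw [Finsupp.sum, Finsupp.finset_sum_apply]
  simp only [Finsupp.single_apply]
  rw [Finset.sum_ite_eq' f.support s]
  by_cases h : s ∈ f.support
  · simp [h]
  · simp [h, Finsupp.notMem_support_iff.mp h]

end QP

noncomputable section
namespace QP
open Finsupp

variable (F : Type) [Field F] (q : F)

lemma mono_x : mono F q (1, 0) = Qx F q := by simp [mono]
lemma mono_y : mono F q (0, 1) = Qy F q := by simp [mono]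

lemma psi_single_one (u : ℕ × ℕ) : psi F q (Finsupp.single u 1) = mono F q u := by
  rw [psi_single, one_smul]

def twR (f : (ℕ × ℕ) →₀ F) : (ℕ × ℕ) →₀ F := f.sum fun p c => Finsupp.single p (q ^ p.2 * c)
def twL (f : (ℕ × ℕ) →₀ F) : (ℕ × ℕ) →₀ F := f.sum fun p c => Finsupp.single p (q ^ p.1 * c)

lemma twR_apply (f : (ℕ × ℕ) →₀ F) (s : ℕ × ℕ) : twR F q f s = q ^ s.2 * f s := by
  rw [twR, Finsupp.sum, Finsupp.finset_sum_apply]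
  simp only [Finsupp.single_apply]
  rw [Finset.sum_congr rfl (fun p _ => ?_), Finset.sum_ite_eq' f.support s
    (fun p => q ^ p.2 * f p)]
  · by_cases h : s ∈ f.support
    · simp [h]
    · simp [h, Finsupp.notMem_support_iff.mp h]
  · by_cases h : p = s <;> simp [h]

lemma twL_apply (f : (ℕ × ℕ) →₀ F) (s : ℕ × ℕ) : twL F q f s = q ^ s.1 * f s := by
  rw [twL, Finsupp.sum, Finsupp.finset_sum_apply]
  simp only [Finsupp.single_apply]
  rw [Finset.sum_congr rfl (fun p _ => ?_), Finset.sum_ite_eq' f.support s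
    (fun p => q ^ p.1 * f p)]
  · by_cases h : s ∈ f.support
    · simp [h]
    · simp [h, Finsupp.notMem_support_iff.mp h]
  · by_cases h : p = s <;> simp [h]

lemma mul_qx (f : (ℕ × ℕ) →₀ F) :
    psi F q f * Qx F q = Qx F q * psi F q (twR F q f) := by
  rw [← mono_x, twR, map_finsuppSum]
  rw [psi_apply, Finsupp.sum, Finsupp.sum, Finset.sum_mul, Finset.mul_sum]
  refine Finset.sum_congr rfl fun p _ => ?_
  beta_reduce
  rw [psi_single, smul_mul_assoc, mul_smul_comm, mono_mul, mono_mul, smul_smul, smul_smul,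
    add_comm p (1, 0)]
  congr 1
  simp only [mul_one, mul_zero, zero_mul, pow_zero, one_mul]
  ring

lemma qy_mul (f : (ℕ × ℕ) →₀ F) :
    Qy F q * psi F q f = psi F q (twL F q f) * Qy F q := by
  rw [← mono_y, twL, map_finsuppSum]
  rw [psi_apply, Finsupp.sum, Finsupp.sum, Finset.sum_mul, Finset.mul_sum]
  refine Finset.sum_congr rfl fun p _ => ?_
  beta_reduce
  rw [psi_single, smul_mul_assoc, mul_smul_comm, mono_mul, mono_mul, smul_smul, smul_smul,
    add_comm (0, 1) p]
  congr 1
  simp only [mul_one, mul_zero, zero_mul, pow_zero, one_mul]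
  ring

end QP

noncomputable section

namespace QP
open Finsupp

variable (F : Type) [Field F] (q : F)

def QPsub : Subalgebra F (QPlane F q) where
  carrier := Set.range (psi F q)
  add_mem' := by rintro a b ⟨f, rfl⟩ ⟨g, rfl⟩; exact ⟨f + g, map_add _ _ _⟩
  zero_mem' := ⟨0, map_zero _⟩
  mul_mem' := by rintro a b ⟨f, rfl⟩ ⟨g, rfl⟩; exact ⟨conv F q f g, (psi_mul F q f g).symm⟩
  one_mem' := ⟨Finsupp.single (0, 0) 1, by rw [psi_single]; simp [mono]⟩
  algebraMap_mem' := fun r => ⟨Finsupp.single (0, 0) r, by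
    rw [psi_single]; simp [mono, Algebra.algebraMap_eq_smul_one]⟩

lemma psi_surjective : Function.Surjective (psi F q) := by
  intro z
  obtain ⟨w, rfl⟩ := RingQuot.mkAlgHom_surjective F (QRel F q) z
  have hw : w ∈ Algebra.adjoin F (Set.range (FreeAlgebra.ι F)) := by
    rw [FreeAlgebra.adjoin_range_ι]; trivial
  have hmem : RingQuot.mkAlgHom F (QRel F q) w ∈
      (Algebra.adjoin F (Set.range (FreeAlgebra.ι F))).map (RingQuot.mkAlgHom F (QRel F q)) :=
    ⟨w, hw, rfl⟩
  rw [AlgHom.map_adjoin] at hmem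
  have hsub : (RingQuot.mkAlgHom F (QRel F q)) '' (Set.range (FreeAlgebra.ι F))
      ⊆ (QPsub F q : Set (QPlane F q)) := by
    rintro _ ⟨_, ⟨i, rfl⟩, rfl⟩
    fin_cases i
    · exact ⟨Finsupp.single (1, 0) 1, by rw [psi_single_one, mono_x]; rfl⟩
    · exact ⟨Finsupp.single (0, 1) 1, by rw [psi_single_one, mono_y]; rfl⟩
  exact Algebra.adjoin_le hsub hmem

lemma conv_zero_right (f : (ℕ × ℕ) →₀ F) : conv F q f 0 = 0 := by
  simp [conv, Finsupp.sum_zero_index, Finsupp.sum]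

lemma conv_zero_left (f : (ℕ × ℕ) →₀ F) : conv F q 0 f = 0 := by
  simp [conv, Finsupp.sum_zero_index]

lemma lex_zero_le (r : ℕ × ℕ) : toLex ((0, 0) : ℕ × ℕ) ≤ toLex r := by
  rw [Prod.Lex.toLex_le_toLex]
  omega

lemma lex_le_add (a b : ℕ × ℕ) : toLex a ≤ toLex (a + b) := by
  rw [Prod.Lex.toLex_le_toLex]
  simp only [Prod.fst_add, Prod.snd_add]
  omega

lemma eq_single_of_max_zero {g : (ℕ × ℕ) →₀ F}
    (h : ∀ r ∈ g.support, toLex r ≤ toLex ((0, 0) : ℕ × ℕ)) :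
    g = Finsupp.single (0, 0) (g (0, 0)) := by
  rw [← Finsupp.support_subset_singleton]
  intro s hs
  rw [Finset.mem_singleton]
  exact lex_le_zero (h s hs)

lemma dvd_conv (hq : q ≠ 0) (hroot : ∀ n : ℕ, 1 ≤ n → q ^ n ≠ 1)
    {f h : (ℕ × ℕ) →₀ F} (hd : EltDvd (psi F q f) (psi F q h)) (hh : h ≠ 0) :
    ∃ g : (ℕ × ℕ) →₀ F, g ≠ 0 ∧ (conv F q f g = h ∨ conv F q g f = h) := by
  obtain ⟨t, ht⟩ := hd
  obtain ⟨g, rfl⟩ := psi_surjective F q t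
  have hg : g ≠ 0 := by
    rintro rfl
    rcases ht with ht | ht <;> rw [map_zero] at ht
    · rw [mul_zero] at ht
      exact hh (psi_injective F q hq hroot (by rw [ht, map_zero]))
    · rw [zero_mul] at ht
      exact hh (psi_injective F q hq hroot (by rw [ht, map_zero]))
  refine ⟨g, hg, ?_⟩
  rcases ht with ht | ht
  · left
    exact psi_injective F q hq hroot (by rw [← psi_mul, ← ht])
  · right
    exact psi_injective F q hq hroot (by rw [← psi_mul, ← ht])

lemma dvd_mono (hq : q ≠ 0) (hroot : ∀ n : ℕ, 1 ≤ n → q ^ n ≠ 1)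
    {f : (ℕ × ℕ) →₀ F} (hf : f ≠ 0) {u : ℕ × ℕ}
    (hd : EltDvd (psi F q f) (psi F q (Finsupp.single u 1))) :
    ∃ Mf Mg : ℕ × ℕ, Mf ∈ f.support ∧ (∀ p ∈ f.support, toLex p ≤ toLex Mf) ∧
      Mf + Mg = u ∧ (Mg = (0, 0) → ∃ c : F, c ≠ 0 ∧ f = Finsupp.single u c) := by
  obtain ⟨g, hg, hc⟩ := dvd_conv F q hq hroot hd (by
    intro h0
    have := Finsupp.single_eq_zero.mp h0
    exact one_ne_zero this)
  have hsupp : (Finsupp.single u (1 : F)).support = {u} :=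
    Finsupp.support_single_ne_zero u one_ne_zero
  rcases hc with hc | hc
  · obtain ⟨Mf, hMf, Mg, hMg, hmaxf, hmaxg, hne, _⟩ := conv_top F q hq hf hg
    rw [hc] at hne
    have hmem : Mf + Mg ∈ ({u} : Finset (ℕ × ℕ)) := by
      rw [← hsupp]; exact Finsupp.mem_support_iff.mpr hne
    rw [Finset.mem_singleton] at hmem
    refine ⟨Mf, Mg, hMf, hmaxf, hmem, ?_⟩
    rintro rfl
    have hgs := eq_single_of_max_zero F hmaxg
    set c := g (0, 0) with hcdef
    have hcne : c ≠ 0 := by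
      rw [hcdef]
      exact Finsupp.mem_support_iff.mp hMg
    have : conv F q f g = c • f := by rw [hgs]; exact conv_single_zero_right F q f c
    rw [this] at hc
    refine ⟨c⁻¹, inv_ne_zero hcne, ?_⟩
    have := congrArg (fun h => c⁻¹ • h) hc
    simp only [smul_smul, inv_mul_cancel₀ hcne, one_smul] at this
    rw [this, Finsupp.smul_single, smul_eq_mul, mul_one]
  · obtain ⟨Mg, hMg, Mf, hMf, hmaxg, hmaxf, hne, _⟩ := conv_top F q hq hg hf
    rw [hc] at hne
    have hmem : Mg + Mf ∈ ({u} : Finset (ℕ × ℕ)) := by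
      rw [← hsupp]; exact Finsupp.mem_support_iff.mpr hne
    rw [Finset.mem_singleton] at hmem
    refine ⟨Mf, Mg, hMf, hmaxf, by rw [add_comm]; exact hmem, ?_⟩
    rintro rfl
    have hgs := eq_single_of_max_zero F hmaxg
    set c := g (0, 0) with hcdef
    have hcne : c ≠ 0 := by
      rw [hcdef]
      exact Finsupp.mem_support_iff.mp hMg
    have : conv F q g f = c • f := by rw [hgs]; exact conv_single_zero_left F q f c
    rw [this] at hc
    refine ⟨c⁻¹, inv_ne_zero hcne, ?_⟩
    have := congrArg (fun h => c⁻¹ • h) hc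
    simp only [smul_smul, inv_mul_cancel₀ hcne, one_smul] at this
    rw [this, Finsupp.smul_single, smul_eq_mul, mul_one]

lemma dvd_scale (hq : q ≠ 0) (hroot : ∀ n : ℕ, 1 ≤ n → q ^ n ≠ 1)
    {f h : (ℕ × ℕ) →₀ F} (hf : f ≠ 0) (φ : ℕ × ℕ → F) (hφ : ∀ s, φ s ≠ 0)
    (happly : ∀ s, h s = φ s * f s)
    (hd : EltDvd (psi F q f) (psi F q h)) :
    ∃ c : F, ∀ s ∈ f.support, φ s = c := by
  have hsupp : h.support = f.support := by
    ext s
    rw [Finsupp.mem_support_iff, Finsupp.mem_support_iff, happly s, mul_ne_zero_iff]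
    exact ⟨fun h => h.2, fun h => ⟨hφ s, h⟩⟩
  have hh : h ≠ 0 := by
    intro h0
    apply hf
    rw [← Finsupp.support_eq_empty, ← hsupp, Finsupp.support_eq_empty, h0]
  obtain ⟨g, hg, hc⟩ := dvd_conv F q hq hroot hd hh
  have key : ∃ c : F, c ≠ 0 ∧ h = c • f := by
    rcases hc with hc | hc
    · obtain ⟨Mf, hMf, Mg, hMg, hmaxf, hmaxg, hne, _⟩ := conv_top F q hq hf hg
      rw [hc] at hne
      have hmem : Mf + Mg ∈ f.support := by rw [← hsupp]; exact Finsupp.mem_support_iff.mpr hne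
      have h1 : toLex (Mf + Mg) ≤ toLex Mf := hmaxf _ hmem
      have h2 : toLex Mf ≤ toLex (Mf + Mg) := lex_le_add Mf Mg
      have h3 : Mf + Mg = Mf := toLex.injective (le_antisymm h1 h2)
      have hMg0 : Mg = (0, 0) := by
        have := congrArg Prod.fst h3
        have := congrArg Prod.snd h3
        simp only [Prod.fst_add, Prod.snd_add] at *
        obtain ⟨a, b⟩ := Mg
        simp only [Prod.mk.injEq]
        omega
      subst hMg0
      have hgs := eq_single_of_max_zero F hmaxg
      refine ⟨g (0, 0), Finsupp.mem_support_iff.mp hMg, ?_⟩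
      rw [← hc, hgs, conv_single_zero_right]
      simp
    · obtain ⟨Mg, hMg, Mf, hMf, hmaxg, hmaxf, hne, _⟩ := conv_top F q hq hg hf
      rw [hc] at hne
      have hmem : Mg + Mf ∈ f.support := by rw [← hsupp]; exact Finsupp.mem_support_iff.mpr hne
      have h1 : toLex (Mg + Mf) ≤ toLex Mf := hmaxf _ hmem
      have h2 : toLex Mf ≤ toLex (Mg + Mf) := by rw [add_comm]; exact lex_le_add Mf Mg
      have h3 : Mg + Mf = Mf := toLex.injective (le_antisymm h1 h2)
      have hMg0 : Mg = (0, 0) := by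
        have := congrArg Prod.fst h3
        have := congrArg Prod.snd h3
        simp only [Prod.fst_add, Prod.snd_add] at *
        obtain ⟨a, b⟩ := Mg
        simp only [Prod.mk.injEq]
        omega
      subst hMg0
      have hgs := eq_single_of_max_zero F hmaxg
      refine ⟨g (0, 0), Finsupp.mem_support_iff.mp hMg, ?_⟩
      rw [← hc, hgs, conv_single_zero_left]
      simp
  obtain ⟨c, hcne, hcf⟩ := key
  refine ⟨c, fun s hs => ?_⟩
  have h1 : h s = c * f s := by rw [hcf]; rfl
  rw [happly s] at h1
  exact mul_right_cancel₀ (Finsupp.mem_support_iff.mp hs) h1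

end QP

noncomputable section

theorem stmt_10 (F : Type) [Field F] [CharZero F] (q : F) (hq : q ≠ 0)
    (hroot : ∀ n : ℕ, 1 ≤ n → q ^ n ≠ 1)
    (p : QPlane F q) (hnc : ¬ IsConstQP F q p) (hp : IsPrimeElt p) :
    ∃ lam : F, p = lam • Qx F q ∨ p = lam • Qy F q := by
  unfold IsConstQP at hnc
  obtain ⟨f, rfl⟩ := QP.psi_surjective F q p
  have hconst : ∀ c : F, QP.psi F q (Finsupp.single ((0, 0) : ℕ × ℕ) c)
      = algebraMap F (QPlane F q) c := by
    intro c; rw [QP.psi_single]; simp [QP.mono, Algebra.algebraMap_eq_smul_one]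
  have hf0 : f ≠ 0 := by
    rintro rfl
    exact hnc ⟨0, by simp⟩
  have hnotsingle0 : ∀ c : F, f ≠ Finsupp.single (0, 0) c := by
    intro c hcc
    exact hnc ⟨c, by rw [hcc, hconst]⟩
  have hXcase : EltDvd (QP.psi F q f) (Qx F q) → ∃ lam : F, QP.psi F q f = lam • Qx F q := by
    intro hd
    rw [← QP.mono_x, ← QP.psi_single_one] at hd
    obtain ⟨Mf, Mg, hMf, hmax, hsum, hzero⟩ := QP.dvd_mono F q hq hroot hf0 hd
    by_cases hM0 : Mf = (0, 0)
    · exact absurd (QP.eq_single_of_max_zero F (fun r hr => by rw [← hM0]; exact hmax r hr))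
        (hnotsingle0 (f (0, 0)))
    · have hMg0 : Mg = (0, 0) := by
        rw [Prod.ext_iff] at hsum
        simp only [Prod.fst_add, Prod.snd_add] at hsum
        have hne' : ¬(Mf.1 = 0 ∧ Mf.2 = 0) := by
          intro hh; exact hM0 (Prod.ext_iff.mpr hh)
        rw [Prod.ext_iff]
        omega
      obtain ⟨c, hcne, hfe⟩ := hzero hMg0
      exact ⟨c, by rw [hfe, QP.psi_single, QP.mono_x]⟩
  have hYcase : EltDvd (QP.psi F q f) (Qy F q) → ∃ lam : F, QP.psi F q f = lam • Qy F q := by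
    intro hd
    rw [← QP.mono_y, ← QP.psi_single_one] at hd
    obtain ⟨Mf, Mg, hMf, hmax, hsum, hzero⟩ := QP.dvd_mono F q hq hroot hf0 hd
    by_cases hM0 : Mf = (0, 0)
    · exact absurd (QP.eq_single_of_max_zero F (fun r hr => by rw [← hM0]; exact hmax r hr))
        (hnotsingle0 (f (0, 0)))
    · have hMg0 : Mg = (0, 0) := by
        rw [Prod.ext_iff] at hsum
        simp only [Prod.fst_add, Prod.snd_add] at hsum
        have hne' : ¬(Mf.1 = 0 ∧ Mf.2 = 0) := by
          intro hh; exact hM0 (Prod.ext_iff.mpr hh)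
        rw [Prod.ext_iff]
        omega
      obtain ⟨c, hcne, hfe⟩ := hzero hMg0
      exact ⟨c, by rw [hfe, QP.psi_single, QP.mono_y]⟩
  rcases hp (Qx F q) (QP.psi F q (QP.twR F q f)) ⟨Qx F q, Or.inl (QP.mul_qx F q f).symm⟩
    with hd | hd
  · exact (hXcase hd).imp fun lam hl => Or.inl hl
  obtain ⟨c, hcR⟩ := QP.dvd_scale F q hq hroot hf0 (fun s => q ^ s.2)
    (fun s => pow_ne_zero _ hq) (QP.twR_apply F q f) hd
  rcases hp (QP.psi F q (QP.twL F q f)) (Qy F q) ⟨Qy F q, Or.inr (QP.qy_mul F q f).symm⟩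
    with hd2 | hd2
  swap
  · exact (hYcase hd2).imp fun lam hl => Or.inr hl
  obtain ⟨c', hcL⟩ := QP.dvd_scale F q hq hroot hf0 (fun s => q ^ s.1)
    (fun s => pow_ne_zero _ hq) (QP.twL_apply F q f) hd2
  obtain ⟨v, hv⟩ := Finsupp.support_nonempty_iff.mpr hf0
  have hsing : f.support ⊆ {v} := by
    intro s hs
    rw [Finset.mem_singleton]
    have e2 : s.2 = v.2 := QP.pow_inj F q hq hroot ((hcR s hs).trans (hcR v hv).symm)
    have e1 : s.1 = v.1 := QP.pow_inj F q hq hroot ((hcL s hs).trans (hcL v hv).symm)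
    exact Prod.ext_iff.mpr ⟨e1, e2⟩
  have hfv : f = Finsupp.single v (f v) := Finsupp.support_subset_singleton.mp hsing
  have hc0ne : f v ≠ 0 := Finsupp.mem_support_iff.mp hv
  obtain ⟨i, j⟩ := v
  have hpf : QP.psi F q f = f (i, j) • QP.mono F q (i, j) := by
    nth_rewrite 1 [hfv]
    rw [QP.psi_single]
  have hvne : ¬(i = 0 ∧ j = 0) := by
    rintro ⟨rfl, rfl⟩
    exact hnotsingle0 (f (0, 0)) hfv
  have hdvdm : EltDvd (QP.psi F q f) (QP.mono F q (i, j)) := by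
    refine ⟨QP.psi F q (Finsupp.single (0, 0) (f (i, j))⁻¹), Or.inl ?_⟩
    rw [QP.psi_mul, QP.conv_single_zero_right, map_smul, hpf, smul_smul,
      inv_mul_cancel₀ hc0ne, one_smul]
  have hdivInfo : ∀ u : ℕ × ℕ, EltDvd (QP.psi F q f) (QP.mono F q u) →
      ∃ Mg : ℕ × ℕ, (i, j) + Mg = u := by
    intro u hdm
    rw [← QP.psi_single_one] at hdm
    obtain ⟨Mf, Mg, hMf, _, hsum, _⟩ := QP.dvd_mono F q hq hroot hf0 hdm
    have hMfv : Mf = (i, j) := Finset.mem_singleton.mp (hsing hMf)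
    exact ⟨Mg, by rw [← hMfv]; exact hsum⟩
  by_cases hi : i = 0
  · subst hi
    by_cases hj1 : j = 1
    · exact ⟨f (0, j), Or.inr (by rw [hpf, hj1, QP.mono_y])⟩
    · exfalso
      have hj2 : 2 ≤ j := by omega
      have hsplit : QP.mono F q ((0 : ℕ), j) = QP.mono F q (0, 1) * QP.mono F q (0, j - 1) := by
        rw [QP.mono_mul]
        have h1 : (((0, 1) : ℕ × ℕ).2 * ((0, j - 1) : ℕ × ℕ).1) = 0 := by simp
        rw [h1, pow_zero, one_smul]
        congr 1
        rw [Prod.mk_add_mk]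
        simp only [Prod.mk.injEq, true_and, and_true]
        omega
      have hd3 : EltDvd (QP.psi F q f) (QP.mono F q (0, 1) * QP.mono F q (0, j - 1)) := by
        rw [← hsplit]; exact hdvdm
      rcases hp _ _ hd3 with h4 | h4
      · obtain ⟨Mg, hMg⟩ := hdivInfo _ h4
        obtain ⟨a, b⟩ := Mg
        rw [Prod.mk_add_mk, Prod.mk.injEq] at hMg
        omega
      · obtain ⟨Mg, hMg⟩ := hdivInfo _ h4
        obtain ⟨a, b⟩ := Mg
        rw [Prod.mk_add_mk, Prod.mk.injEq] at hMg
        omega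
  · by_cases hj : j = 0
    · subst hj
      by_cases hi1 : i = 1
      · exact ⟨f (i, 0), Or.inl (by rw [hpf, hi1, QP.mono_x])⟩
      · exfalso
        have hi2 : 2 ≤ i := by omega
        have hsplit : QP.mono F q (i, (0 : ℕ)) = QP.mono F q (1, 0) * QP.mono F q (i - 1, 0) := by
          rw [QP.mono_mul]
          have h1 : ((((1, 0) : ℕ × ℕ)).2 * (((i - 1, 0) : ℕ × ℕ)).1) = 0 := by simp
          rw [h1, pow_zero, one_smul]
          congr 1
          rw [Prod.mk_add_mk]
          simp only [Prod.mk.injEq, true_and, and_true]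
          omega
        have hd3 : EltDvd (QP.psi F q f) (QP.mono F q (1, 0) * QP.mono F q (i - 1, 0)) := by
          rw [← hsplit]; exact hdvdm
        rcases hp _ _ hd3 with h4 | h4
        · obtain ⟨Mg, hMg⟩ := hdivInfo _ h4
          obtain ⟨a, b⟩ := Mg
          rw [Prod.mk_add_mk, Prod.mk.injEq] at hMg
          omega
        · obtain ⟨Mg, hMg⟩ := hdivInfo _ h4
          obtain ⟨a, b⟩ := Mg
          rw [Prod.mk_add_mk, Prod.mk.injEq] at hMg
          omega
    · exfalso
      have hsplit : QP.mono F q (i, j) = QP.mono F q (i, 0) * QP.mono F q (0, j) := by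
        rw [QP.mono_mul]
        have h1 : ((((i, 0) : ℕ × ℕ)).2 * (((0, j) : ℕ × ℕ)).1) = 0 := by simp
        rw [h1, pow_zero, one_smul]
        congr 1
        rw [Prod.mk_add_mk]
        simp
      have hd3 : EltDvd (QP.psi F q f) (QP.mono F q (i, 0) * QP.mono F q (0, j)) := by
        rw [← hsplit]; exact hdvdm
      rcases hp _ _ hd3 with h4 | h4
      · obtain ⟨Mg, hMg⟩ := hdivInfo _ h4
        obtain ⟨a, b⟩ := Mg
        rw [Prod.mk_add_mk, Prod.mk.injEq] at hMg
        omega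
      · obtain ⟨Mg, hMg⟩ := hdivInfo _ h4
        obtain ⟨a, b⟩ := Mg
        rw [Prod.mk_add_mk, Prod.mk.injEq] at hMg
        omega
end
end
end
end
end
end
end
end

section
/- Let F be a field of characteristic zero and let q ∈ F be a primitive n-th root of unity for some integer n ≥ 1 (i.e., q^n = 1 and q^k ≠ 1 for 0 < k < n). If p is a nonconstant prime element of the quantum plane O_q(F²), then either p is both central and irreducible, or p is a scalar multiple of x or a scalar multiple of y. -/
noncomputable section

/-- An element is irreducible if it is nonconstant and not reducible. -/
def IsIrreducibleQP (F : Type) [Field F] (q : F) (f : QPlane F q) : Prop :=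
  ¬ IsConstQP F q f ∧ ¬ IsReducibleQP F q f

/-- An element is central if it commutes with everything. -/
def IsCentralElt {R : Type} [Ring R] (r : R) : Prop :=
  ∀ s : R, r * s = s * r

set_option linter.unusedVariables false

namespace QPf


variable (F : Type) [Field F] (q : F)

abbrev V : Type := (ℕ × ℕ) →₀ F

def Xop : V F →ₗ[F] V F := Finsupp.lmapDomain F F fun ab => (ab.1 + 1, ab.2)

def Yop : V F →ₗ[F] V F :=
  Finsupp.lsum F fun ab => (q ^ ab.1) • Finsupp.lsingle (ab.1, ab.2 + 1)

lemma Xop_single (a : ℕ × ℕ) (c : F) :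
    Xop F (Finsupp.single a c) = Finsupp.single (a.1 + 1, a.2) c := by
  simp [Xop, Finsupp.lmapDomain_apply, Finsupp.mapDomain_single]

lemma Yop_single (a : ℕ × ℕ) (c : F) :
    Yop F q (Finsupp.single a c) = Finsupp.single (a.1, a.2 + 1) (q ^ a.1 * c) := by
  simp [Yop, Finsupp.lsum_single, Finsupp.smul_single, smul_eq_mul]

lemma relEnd : (Yop F q) * (Xop F) = q • ((Xop F) * (Yop F q)) := by
  refine Finsupp.lhom_ext fun a c => ?_
  show (Yop F q) ((Xop F) (Finsupp.single a c)) =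
    q • ((Xop F) ((Yop F q) (Finsupp.single a c)))
  rw [Xop_single, Yop_single, Yop_single, Xop_single]
  simp only [Finsupp.smul_single, smul_eq_mul]
  congr 1
  ring

def rho : QPlane F q →ₐ[F] Module.End F (V F) :=
  RingQuot.liftAlgHom F ⟨FreeAlgebra.lift F ![Xop F, Yop F q], by
    rintro _ _ ⟨⟩
    simp only [map_mul, map_smul, FreeAlgebra.lift_ι_apply, Matrix.cons_val_zero,
      Matrix.cons_val_one, Matrix.head_cons]
    exact relEnd F q⟩

lemma rho_x : rho F q (Qx F q) = Xop F := by
  rw [Qx, rho, RingQuot.liftAlgHom_mkAlgHom_apply]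
  simp [FreeAlgebra.lift_ι_apply]

lemma rho_y : rho F q (Qy F q) = Yop F q := by
  rw [Qy, rho, RingQuot.liftAlgHom_mkAlgHom_apply]
  simp [FreeAlgebra.lift_ι_apply]

def Lmap : QPlane F q →ₗ[F] V F where
  toFun f := rho F q f (Finsupp.single (0, 0) 1)
  map_add' a b := by simp [map_add]
  map_smul' c a := by simp [map_smul]

lemma Lmap_apply (f : QPlane F q) :
    Lmap F q f = rho F q f (Finsupp.single (0, 0) 1) := rfl

lemma L_one : Lmap F q 1 = Finsupp.single (0, 0) 1 := by
  rw [Lmap_apply, map_one]; rfl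

lemma Xop_pow (k : ℕ) (a : ℕ × ℕ) (c : F) :
    ((Xop F) ^ k) (Finsupp.single a c) = Finsupp.single (a.1 + k, a.2) c := by
  induction k with
  | zero => simp
  | succ n ih =>
      rw [pow_succ', Module.End.mul_apply, ih, Xop_single]
      simp only [add_assoc]

lemma Yop_pow (k m : ℕ) (c : F) :
    ((Yop F q) ^ k) (Finsupp.single (0, m) c) = Finsupp.single (0, m + k) c := by
  induction k with
  | zero => simp
  | succ n ih =>
      rw [pow_succ', Module.End.mul_apply, ih]
      rw [show ((0:ℕ), m + n) = ((0:ℕ),  m + n) from rfl, Yop_single]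
      norm_num [add_assoc]

lemma L_mono (i j : ℕ) :
    Lmap F q (Qx F q ^ i * Qy F q ^ j) = Finsupp.single (i, j) 1 := by
  rw [Lmap_apply, map_mul, map_pow, map_pow, rho_x, rho_y, Module.End.mul_apply]
  rw [show (Finsupp.single ((0:ℕ),(0:ℕ)) (1:F)) = Finsupp.single ((0:ℕ),(0:ℕ)) (1:F) from rfl]
  rw [Yop_pow, Xop_pow]
  norm_num

def Mmap : V F →ₗ[F] QPlane F q :=
  Finsupp.lsum F fun ab =>
    LinearMap.toSpanSingleton F _ (Qx F q ^ ab.1 * Qy F q ^ ab.2)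

lemma M_single (a : ℕ × ℕ) (c : F) :
    Mmap F q (Finsupp.single a c) = c • (Qx F q ^ a.1 * Qy F q ^ a.2) := by
  simp [Mmap, Finsupp.lsum_single, LinearMap.toSpanSingleton_apply]

lemma LM (v : V F) : Lmap F q (Mmap F q v) = v := by
  have h : (Lmap F q).comp (Mmap F q) = LinearMap.id :=
    Finsupp.lhom_ext fun a c => by
      simp [M_single, map_smul, L_mono, Finsupp.smul_single]
  exact LinearMap.congr_fun h v

lemma yx : Qy F q * Qx F q = q • (Qx F q * Qy F q) := by
  have h := RingQuot.mkAlgHom_rel F (QRel.rel (F := F) (q := q))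
  simpa [Qx, Qy, map_mul, map_smul] using h

lemma y_xpow (k : ℕ) : Qy F q * Qx F q ^ k = q ^ k • (Qx F q ^ k * Qy F q) := by
  induction k with
  | zero => simp
  | succ n ih =>
      rw [pow_succ, ← mul_assoc, ih, smul_mul_assoc, mul_assoc, yx]
      rw [mul_smul_comm, ← mul_assoc, smul_smul, ← pow_succ]

lemma ypow_xpow (j k : ℕ) :
    Qy F q ^ j * Qx F q ^ k = q ^ (j * k) • (Qx F q ^ k * Qy F q ^ j) := by
  induction j with
  | zero => simp
  | succ n ih =>
      rw [pow_succ, mul_assoc, y_xpow, mul_smul_comm, ← mul_assoc, ih,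
        smul_mul_assoc, smul_smul, mul_assoc, ← pow_succ, ← pow_add]
      congr 1
      ring

lemma mono_mul (i j k l : ℕ) :
    (Qx F q ^ i * Qy F q ^ j) * (Qx F q ^ k * Qy F q ^ l) =
      q ^ (j * k) • (Qx F q ^ (i + k) * Qy F q ^ (j + l)) := by
  calc (Qx F q ^ i * Qy F q ^ j) * (Qx F q ^ k * Qy F q ^ l)
      = Qx F q ^ i * (Qy F q ^ j * Qx F q ^ k) * Qy F q ^ l := by
        rw [mul_assoc, mul_assoc, mul_assoc]
    _ = q ^ (j * k) • (Qx F q ^ (i + k) * Qy F q ^ (j + l)) := by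
        rw [ypow_xpow, mul_smul_comm, smul_mul_assoc, pow_add, pow_add]
        rw [mul_assoc, mul_assoc, mul_assoc]

lemma single_mul_mem (a : ℕ × ℕ) (c : F) (v : V F) :
    Mmap F q (Finsupp.single a c) * Mmap F q v ∈ LinearMap.range (Mmap F q) := by
  induction v using Finsupp.induction with
  | zero => simp
  | single_add b d f hbf hd ih =>
      rw [map_add, mul_add]
      refine add_mem ?_ ih
      refine ⟨Finsupp.single (a.1 + b.1, a.2 + b.2) (c * d * q ^ (a.2 * b.1)), ?_⟩
      rw [M_single, M_single, M_single, smul_mul_assoc, mul_smul_comm,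
        mono_mul, smul_smul, smul_smul]

lemma mul_mem_range (u v : V F) :
    Mmap F q u * Mmap F q v ∈ LinearMap.range (Mmap F q) := by
  induction u using Finsupp.induction with
  | zero => simp
  | single_add a c f haf hc ih =>
      rw [map_add, add_mul]
      exact add_mem (single_mul_mem F q a c v) ih

lemma mk_mem_range (z : FreeAlgebra F (Fin 2)) :
    RingQuot.mkAlgHom F (QRel F q) z ∈ LinearMap.range (Mmap F q) := by
  induction z using FreeAlgebra.induction with
  | grade0 r =>
      refine ⟨Finsupp.single (0, 0) r, ?_⟩
      rw [M_single, AlgHom.commutes, Algebra.algebraMap_eq_smul_one]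
      simp
  | grade1 i =>
      fin_cases i
      · exact ⟨Finsupp.single (1, 0) 1, by rw [M_single]; simp [Qx]⟩
      · exact ⟨Finsupp.single (0, 1) 1, by rw [M_single]; simp [Qy]⟩
  | mul a b ha hb =>
      obtain ⟨u, hu⟩ := ha
      obtain ⟨v, hv⟩ := hb
      rw [map_mul, ← hu, ← hv]
      exact mul_mem_range F q u v
  | add a b ha hb =>
      rw [map_add]
      exact add_mem ha hb

lemma M_surj : Function.Surjective (Mmap F q) := by
  intro f
  obtain ⟨z, rfl⟩ := RingQuot.mkAlgHom_surjective F (QRel F q) f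
  exact mk_mem_range F q z

lemma ML (f : QPlane F q) : Mmap F q (Lmap F q f) = f := by
  obtain ⟨v, rfl⟩ := M_surj F q f
  rw [LM]

lemma L_inj : Function.Injective (Lmap F q) := by
  intro a b h
  rw [← ML F q a, h, ML]

lemma L_eq_zero_iff (f : QPlane F q) : Lmap F q f = 0 ↔ f = 0 := by
  constructor
  · intro h; exact L_inj F q (by rw [h, map_zero])
  · intro h; rw [h, map_zero]

def Bmap : V F →ₗ[F] V F →ₗ[F] V F :=
  Finsupp.lsum F fun a =>
    LinearMap.toSpanSingleton F _
      (Finsupp.lsum (R := F) F fun b =>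
        (q ^ (a.2 * b.1)) • Finsupp.lsingle (a.1 + b.1, a.2 + b.2))

lemma B_single (a b : ℕ × ℕ) (c d : F) :
    Bmap F q (Finsupp.single a c) (Finsupp.single b d) =
      Finsupp.single (a.1 + b.1, a.2 + b.2) (c * d * q ^ (a.2 * b.1)) := by
  rw [Bmap, Finsupp.lsum_single, LinearMap.toSpanSingleton_apply,
    LinearMap.smul_apply, Finsupp.lsum_single]
  simp only [LinearMap.smul_apply, Finsupp.lsingle_apply, Finsupp.smul_single,
    smul_eq_mul]
  congr 1
  ring

lemma L_mul (f g : QPlane F q) :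
    Lmap F q (f * g) = Bmap F q (Lmap F q f) (Lmap F q g) := by
  have key : (((LinearMap.mul F (QPlane F q)).compl₁₂ (Mmap F q)
      (Mmap F q)).compr₂ (Lmap F q)) = Bmap F q := by
    refine Finsupp.lhom_ext fun a c => ?_
    refine Finsupp.lhom_ext fun b d => ?_
    simp only [LinearMap.compr₂_apply, LinearMap.compl₁₂_apply,
      LinearMap.mul_apply']
    rw [M_single, M_single, smul_mul_assoc, mul_smul_comm, mono_mul,
      smul_smul, smul_smul, map_smul, L_mono, B_single, Finsupp.smul_single,
      smul_eq_mul, mul_one]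
  obtain ⟨u, rfl⟩ := M_surj F q f
  obtain ⟨v, rfl⟩ := M_surj F q g
  have h := LinearMap.congr_fun (LinearMap.congr_fun key u) v
  simp only [LinearMap.compr₂_apply, LinearMap.compl₁₂_apply,
    LinearMap.mul_apply'] at h
  rw [LM, LM, ← h]

lemma B_apply_eq (u v : V F) (cpt : ℕ × ℕ) :
    Bmap F q u v cpt =
      ∑ a ∈ u.support, ∑ b ∈ v.support,
        (if (a.1 + b.1, a.2 + b.2) = cpt then u a * v b * q ^ (a.2 * b.1)
         else 0) := by
  conv_lhs => rw [← Finsupp.sum_single u, ← Finsupp.sum_single v]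
  rw [Finsupp.sum, Finsupp.sum,
    map_sum (Bmap F q) (fun a => Finsupp.single a (u a)) u.support,
    LinearMap.sum_apply, Finsupp.finset_sum_apply]
  refine Finset.sum_congr rfl fun a ha => ?_
  rw [map_sum, Finsupp.finset_sum_apply]
  refine Finset.sum_congr rfl fun b hb => ?_
  rw [B_single, Finsupp.single_apply]

def degV (u : V F) : ℕ := u.support.sup fun ab => ab.1 + ab.2

lemma B_ne_zero_deg (hq : q ≠ 0) (u v : V F) (hu : u ≠ 0) (hv : v ≠ 0) :
    Bmap F q u v ≠ 0 ∧
      degV F (Bmap F q u v) = degV F u + degV F v := by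
  obtain ⟨A, hA, hAmax⟩ := Finset.exists_max_image u.support
    (fun ab => toLex (ab.1 + ab.2, ab.1)) (Finsupp.support_nonempty_iff.mpr hu)
  obtain ⟨B, hB, hBmax⟩ := Finset.exists_max_image v.support
    (fun ab => toLex (ab.1 + ab.2, ab.1)) (Finsupp.support_nonempty_iff.mpr hv)
  have hcoef : Bmap F q u v (A.1 + B.1, A.2 + B.2)
      = u A * v B * q ^ (A.2 * B.1) := by
    rw [B_apply_eq, Finset.sum_eq_single A]
    · rw [Finset.sum_eq_single B]
      · simp
      · intro b hb hbne
        rw [if_neg]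
        intro hEq
        apply hbne
        have h1 : A.1 + b.1 = A.1 + B.1 := congrArg Prod.fst hEq
        have h2 : A.2 + b.2 = A.2 + B.2 := congrArg Prod.snd hEq
        exact Prod.ext (by omega) (by omega)
      · intro h; exact absurd hB h
    · intro a ha hane
      refine Finset.sum_eq_zero fun b hb => ?_
      rw [if_neg]
      intro hEq
      have h1 : a.1 + b.1 = A.1 + B.1 := congrArg Prod.fst hEq
      have h2 : a.2 + b.2 = A.2 + B.2 := congrArg Prod.snd hEq
      have hA' := Prod.Lex.toLex_le_toLex.mp (hAmax a ha)
      have hB' := Prod.Lex.toLex_le_toLex.mp (hBmax b hb)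
      have hane' : ¬ (a.1 = A.1 ∧ a.2 = A.2) :=
        fun h => hane (Prod.ext h.1 h.2)
      dsimp only at hA' hB'
      omega
    · intro h; exact absurd hA h
  have hval : u A * v B * q ^ (A.2 * B.1) ≠ 0 :=
    mul_ne_zero (mul_ne_zero (Finsupp.mem_support_iff.mp hA)
      (Finsupp.mem_support_iff.mp hB)) (pow_ne_zero _ hq)
  have hmem : (A.1 + B.1, A.2 + B.2) ∈ (Bmap F q u v).support :=
    Finsupp.mem_support_iff.mpr (by rw [hcoef]; exact hval)
  have hBne : Bmap F q u v ≠ 0 := fun h => by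
    rw [h] at hmem; simp at hmem
  refine ⟨hBne, ?_⟩
  have hdegu : degV F u = A.1 + A.2 := by
    rw [degV]
    refine le_antisymm (Finset.sup_le fun a ha => ?_)
      (Finset.le_sup (f := fun ab : ℕ × ℕ => ab.1 + ab.2) hA)
    have := Prod.Lex.toLex_le_toLex.mp (hAmax a ha)
    dsimp only at this
    omega
  have hdegv : degV F v = B.1 + B.2 := by
    rw [degV]
    refine le_antisymm (Finset.sup_le fun b hb => ?_)
      (Finset.le_sup (f := fun ab : ℕ × ℕ => ab.1 + ab.2) hB)
    have := Prod.Lex.toLex_le_toLex.mp (hBmax b hb)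
    dsimp only at this
    omega
  refine le_antisymm (Finset.sup_le fun cpt hc => ?_) ?_
  · rw [Finsupp.mem_support_iff, B_apply_eq] at hc
    obtain ⟨a, ha, hne2⟩ := Finset.exists_ne_zero_of_sum_ne_zero hc
    obtain ⟨b, hb, hne3⟩ := Finset.exists_ne_zero_of_sum_ne_zero hne2
    have heq : (a.1 + b.1, a.2 + b.2) = cpt := by
      by_contra hcontra
      rw [if_neg hcontra] at hne3
      exact hne3 rfl
    have h1 : a.1 + b.1 = cpt.1 := congrArg Prod.fst heq
    have h2 : a.2 + b.2 = cpt.2 := congrArg Prod.snd heq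
    have hu1 : a.1 + a.2 ≤ degV F u := Finset.le_sup (f := fun ab => ab.1 + ab.2) ha
    have hv1 : b.1 + b.2 ≤ degV F v := Finset.le_sup (f := fun ab => ab.1 + ab.2) hb
    omega
  · rw [hdegu, hdegv]
    have := Finset.le_sup (f := fun ab : ℕ × ℕ => ab.1 + ab.2) hmem
    dsimp only at this
    rw [degV]
    omega

def degQ (f : QPlane F q) : ℕ := degV F (Lmap F q f)

lemma mul_ne_zero_degQ (hq : q ≠ 0) {f g : QPlane F q} (hf : f ≠ 0) (hg : g ≠ 0) :
    f * g ≠ 0 ∧ degQ F q (f * g) = degQ F q f + degQ F q g := by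
  have hf' : Lmap F q f ≠ 0 := fun h => hf ((L_eq_zero_iff F q f).mp h)
  have hg' : Lmap F q g ≠ 0 := fun h => hg ((L_eq_zero_iff F q g).mp h)
  obtain ⟨h1, h2⟩ := B_ne_zero_deg F q hq (Lmap F q f) (Lmap F q g) hf' hg'
  rw [← L_mul] at h1 h2
  exact ⟨fun h => h1 (by rw [h, map_zero]), h2⟩

lemma L_algebraMap (c : F) :
    Lmap F q (algebraMap F (QPlane F q) c) = Finsupp.single (0, 0) c := by
  rw [Algebra.algebraMap_eq_smul_one, map_smul, L_one, Finsupp.smul_single,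
    smul_eq_mul, mul_one]

lemma const_of_degQ_eq_zero {f : QPlane F q} (h : degQ F q f = 0) :
    IsConstQP F q f := by
  have hsub : (Lmap F q f).support ⊆ {(0, 0)} := by
    intro a ha
    have h1 : a.1 + a.2 ≤ 0 := h ▸ Finset.le_sup (f := fun ab : ℕ × ℕ => ab.1 + ab.2) ha
    rw [Finset.mem_singleton]
    exact Prod.ext (by omega) (by omega)
  have h2 := Finsupp.support_subset_singleton.mp hsub
  refine ⟨Lmap F q f (0, 0), ?_⟩
  apply L_inj F q
  rw [L_algebraMap, ← h2]

lemma degQ_const (c : F) : degQ F q (algebraMap F (QPlane F q) c) = 0 := by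
  rw [degQ, L_algebraMap]
  refine Nat.le_antisymm (Finset.sup_le fun a ha => ?_) (Nat.zero_le _)
  have := Finsupp.support_single_subset ha
  rw [Finset.mem_singleton] at this
  subst this
  simp

lemma degQ_pos_of_nonconst {f : QPlane F q} (h : ¬ IsConstQP F q f) :
    1 ≤ degQ F q f := by
  by_contra hc
  exact h (const_of_degQ_eq_zero F q (by omega))

lemma nonconst_ne_zero {f : QPlane F q} (h : ¬ IsConstQP F q f) : f ≠ 0 :=
  fun hf => h ⟨0, by rw [map_zero, hf]⟩

lemma prime_not_reducible (hq : q ≠ 0) {p : QPlane F q}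
    (hp : IsPrimeElt p) : ¬ IsReducibleQP F q p := by
  rintro ⟨g, h, hg, hh, rfl⟩
  have hg0 : g ≠ 0 := nonconst_ne_zero F q hg
  have hh0 : h ≠ 0 := nonconst_ne_zero F q hh
  have hdeg := (mul_ne_zero_degQ F q hq hg0 hh0).2
  have hd := hp g h ⟨1, Or.inl (mul_one _).symm⟩
  have key : ∀ w : QPlane F q, w ≠ 0 → EltDvd (g * h) w →
      degQ F q (g * h) ≤ degQ F q w := by
    rintro w hw ⟨t, ht | ht⟩
    · have ht0 : t ≠ 0 := fun h0 => hw (by rw [ht, h0, mul_zero])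
      have := (mul_ne_zero_degQ F q hq ((mul_ne_zero_degQ F q hq hg0 hh0).1) ht0).2
      rw [← ht] at this
      omega
    · have ht0 : t ≠ 0 := fun h0 => hw (by rw [ht, h0, zero_mul])
      have := (mul_ne_zero_degQ F q hq ht0 ((mul_ne_zero_degQ F q hq hg0 hh0).1)).2
      rw [← ht] at this
      omega
  have h1 := degQ_pos_of_nonconst F q hg
  have h2 := degQ_pos_of_nonconst F q hh
  rcases hd with hd | hd
  · have := key g hg0 hd
    omega
  · have := key h hh0 hd
    omega

lemma exists_scalar_of_dvd (hq : q ≠ 0) {p w : QPlane F q} (hp0 : p ≠ 0)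
    (hw : w ≠ 0) (hdeg : degQ F q w ≤ degQ F q p) (hd : EltDvd p w) :
    ∃ c : F, c ≠ 0 ∧ w = c • p := by
  obtain ⟨t, ht | ht⟩ := hd
  · have ht0 : t ≠ 0 := fun h0 => hw (by rw [ht, h0, mul_zero])
    have hdd := (mul_ne_zero_degQ F q hq hp0 ht0).2
    rw [← ht] at hdd
    have htc : IsConstQP F q t := const_of_degQ_eq_zero F q (by omega)
    obtain ⟨c, hc⟩ := htc
    refine ⟨c, fun h0 => ht0 (by rw [← hc, h0, map_zero]), ?_⟩
    rw [ht, ← hc, Algebra.algebraMap_eq_smul_one, mul_smul_comm, mul_one]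
  · have ht0 : t ≠ 0 := fun h0 => hw (by rw [ht, h0, zero_mul])
    have hdd := (mul_ne_zero_degQ F q hq ht0 hp0).2
    rw [← ht] at hdd
    have htc : IsConstQP F q t := const_of_degQ_eq_zero F q (by omega)
    obtain ⟨c, hc⟩ := htc
    refine ⟨c, fun h0 => ht0 (by rw [← hc, h0, map_zero]), ?_⟩
    rw [ht, ← hc, Algebra.algebraMap_eq_smul_one, smul_mul_assoc, one_mul]

def S1 : V F →ₗ[F] V F := Finsupp.lsum F fun ab => (q ^ ab.2) • Finsupp.lsingle ab

def S2 : V F →ₗ[F] V F :=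
  Finsupp.lsum F fun ab => ((q ^ ab.1)⁻¹) • Finsupp.lsingle ab

lemma S1_single (a : ℕ × ℕ) (c : F) :
    S1 F q (Finsupp.single a c) = Finsupp.single a (q ^ a.2 * c) := by
  simp [S1, Finsupp.lsum_single, Finsupp.smul_single, smul_eq_mul]

lemma S2_single (a : ℕ × ℕ) (c : F) :
    S2 F q (Finsupp.single a c) = Finsupp.single a ((q ^ a.1)⁻¹ * c) := by
  simp [S2, Finsupp.lsum_single, Finsupp.smul_single, smul_eq_mul]

lemma S1_apply (u : V F) (ab : ℕ × ℕ) : S1 F q u ab = q ^ ab.2 * u ab := by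
  induction u using Finsupp.induction with
  | zero => simp
  | single_add a c f haf hc ih =>
      rw [map_add, Finsupp.add_apply, ih, S1_single, Finsupp.add_apply]
      rcases eq_or_ne a ab with rfl | hne
      · simp [Finsupp.single_apply, mul_add]
      · simp [Finsupp.single_apply, hne]

lemma S2_apply (u : V F) (ab : ℕ × ℕ) : S2 F q u ab = (q ^ ab.1)⁻¹ * u ab := by
  induction u using Finsupp.induction with
  | zero => simp
  | single_add a c f haf hc ih =>
      rw [map_add, Finsupp.add_apply, ih, S2_single, Finsupp.add_apply]
      rcases eq_or_ne a ab with rfl | hne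
      · simp [Finsupp.single_apply, mul_add]
      · simp [Finsupp.single_apply, hne]

lemma S1_support (hq : q ≠ 0) (u : V F) : (S1 F q u).support = u.support := by
  ext ab
  rw [Finsupp.mem_support_iff, Finsupp.mem_support_iff, S1_apply]
  constructor
  · intro h hc; exact h (by rw [hc, mul_zero])
  · intro h; exact mul_ne_zero (pow_ne_zero _ hq) h

lemma S2_support (hq : q ≠ 0) (u : V F) : (S2 F q u).support = u.support := by
  ext ab
  rw [Finsupp.mem_support_iff, Finsupp.mem_support_iff, S2_apply]
  constructor
  · intro h hc; exact h (by rw [hc, mul_zero])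
  · intro h; exact mul_ne_zero (inv_ne_zero (pow_ne_zero _ hq)) h

lemma intertwine_x :
    (Bmap F q).flip (Finsupp.single (1, 0) 1) =
      (Bmap F q (Finsupp.single (1, 0) 1)) ∘ₗ S1 F q := by
  refine Finsupp.lhom_ext fun a c => ?_
  rw [LinearMap.flip_apply, LinearMap.comp_apply, S1_single, B_single, B_single]
  dsimp only
  rw [show (a.1 + 1, a.2 + 0) = (1 + a.1, 0 + a.2) from by
    rw [Prod.ext_iff]; omega]
  congr 1
  ring

lemma intertwine_y (hq : q ≠ 0) :
    (Bmap F q).flip (Finsupp.single (0, 1) 1) =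
      (Bmap F q (Finsupp.single (0, 1) 1)) ∘ₗ S2 F q := by
  refine Finsupp.lhom_ext fun a c => ?_
  rw [LinearMap.flip_apply, LinearMap.comp_apply, S2_single, B_single, B_single]
  dsimp only
  rw [show (a.1 + 0, a.2 + 1) = (0 + a.1, 1 + a.2) from by
    rw [Prod.ext_iff]; omega]
  congr 1
  field_simp
  simp

lemma L_x : Lmap F q (Qx F q) = Finsupp.single (1, 0) 1 := by
  have := L_mono F q 1 0
  simpa using this

lemma L_y : Lmap F q (Qy F q) = Finsupp.single (0, 1) 1 := by
  have := L_mono F q 0 1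
  simpa using this

def shY : V F →ₗ[F] V F := Finsupp.lsum F fun ab => Finsupp.lsingle (ab.1, ab.2 - 1)

def shX : V F →ₗ[F] V F := Finsupp.lsum F fun ab => Finsupp.lsingle (ab.1 - 1, ab.2)

lemma shY_single (a : ℕ × ℕ) (c : F) :
    shY F (Finsupp.single a c) = Finsupp.single (a.1, a.2 - 1) c := by
  simp [shY, Finsupp.lsum_single]

lemma shX_single (a : ℕ × ℕ) (c : F) :
    shX F (Finsupp.single a c) = Finsupp.single (a.1 - 1, a.2) c := by
  simp [shX, Finsupp.lsum_single]

lemma mem_support_step (a : ℕ × ℕ) (c : F) (f : V F) (haf : a ∉ f.support)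
    (hc : c ≠ 0) :
    a ∈ (Finsupp.single a c + f).support ∧
      ∀ ab ∈ f.support, ab ∈ (Finsupp.single a c + f).support := by
  constructor
  · rw [Finsupp.mem_support_iff, Finsupp.add_apply, Finsupp.single_eq_same,
      Finsupp.notMem_support_iff.mp haf, add_zero]
    exact hc
  · intro ab hab
    have hne : a ≠ ab := fun h => haf (h ▸ hab)
    rw [Finsupp.mem_support_iff, Finsupp.add_apply, Finsupp.single_apply,
      if_neg hne, zero_add]
    exact Finsupp.mem_support_iff.mp hab

lemma shY_prop (u : V F) (h : ∀ ab ∈ u.support, 1 ≤ ab.2) :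
    Bmap F q (shY F u) (Finsupp.single (0, 1) 1) = u := by
  induction u using Finsupp.induction with
  | zero => simp
  | single_add a c f haf hc ih =>
      obtain ⟨hmem, hmem2⟩ := mem_support_step F a c f haf hc
      rw [map_add, map_add, LinearMap.add_apply, ih (fun ab hab => h ab (hmem2 ab hab))]
      congr 1
      rw [shY_single, B_single]
      dsimp only
      have h2 : 1 ≤ a.2 := h a hmem
      rw [show (a.1 + 0, a.2 - 1 + 1) = a from by rw [Prod.ext_iff]; omega]
      norm_num

lemma shX_prop (u : V F) (h : ∀ ab ∈ u.support, 1 ≤ ab.1) :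
    Bmap F q (Finsupp.single (1, 0) 1) (shX F u) = u := by
  induction u using Finsupp.induction with
  | zero => simp
  | single_add a c f haf hc ih =>
      obtain ⟨hmem, hmem2⟩ := mem_support_step F a c f haf hc
      rw [map_add, map_add, ih (fun ab hab => h ab (hmem2 ab hab))]
      congr 1
      rw [shX_single, B_single]
      dsimp only
      have h2 : 1 ≤ a.1 := h a hmem
      rw [show (1 + (a.1 - 1), 0 + a.2) = a from by rw [Prod.ext_iff]; omega]
      norm_num

lemma adjoin_xy : Algebra.adjoin F {Qx F q, Qy F q} = ⊤ := by
  rw [eq_top_iff]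
  rintro f -
  obtain ⟨z, rfl⟩ := RingQuot.mkAlgHom_surjective F (QRel F q) f
  induction z using FreeAlgebra.induction with
  | grade0 r =>
      rw [AlgHom.commutes]
      exact Subalgebra.algebraMap_mem _ r
  | grade1 i =>
      fin_cases i
      · exact Algebra.subset_adjoin (Set.mem_insert _ _)
      · exact Algebra.subset_adjoin (Set.mem_insert_of_mem _ rfl)
  | mul a b ha hb => rw [map_mul]; exact mul_mem ha hb
  | add a b ha hb => rw [map_add]; exact add_mem ha hb

lemma central_of_comm (p : QPlane F q) (hx : p * Qx F q = Qx F q * p)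
    (hy : p * Qy F q = Qy F q * p) : IsCentralElt p := by
  intro s
  have hle : Algebra.adjoin F {Qx F q, Qy F q} ≤ Subalgebra.centralizer F {p} := by
    rw [Algebra.adjoin_le_iff]
    rintro z hz
    rw [SetLike.mem_coe, Subalgebra.mem_centralizer_iff]
    intro g hg
    rw [Set.mem_singleton_iff] at hg
    subst hg
    rcases hz with rfl | hz
    · exact hx
    · rw [Set.mem_singleton_iff] at hz
      subst hz
      exact hy
  have hs : s ∈ Subalgebra.centralizer F {p} := by
    apply hle
    rw [adjoin_xy]
    exact Algebra.mem_top
  exact (Subalgebra.mem_centralizer_iff F).mp hs p (Set.mem_singleton p)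

lemma degQ_x : degQ F q (Qx F q) = 1 := by
  rw [degQ, L_x, degV, Finsupp.support_single_ne_zero _ one_ne_zero]
  simp

lemma degQ_y : degQ F q (Qy F q) = 1 := by
  rw [degQ, L_y, degV, Finsupp.support_single_ne_zero _ one_ne_zero]
  simp

lemma x_ne_zero : Qx F q ≠ 0 := by
  intro h
  have h2 := L_x F q
  rw [h, map_zero] at h2
  exact one_ne_zero (Finsupp.single_eq_zero.mp h2.symm)

lemma y_ne_zero : Qy F q ≠ 0 := by
  intro h
  have h2 := L_y F q
  rw [h, map_zero] at h2
  exact one_ne_zero (Finsupp.single_eq_zero.mp h2.symm)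

lemma nonconst_x : ¬ IsConstQP F q (Qx F q) := by
  rintro ⟨c, hc⟩
  have h1 := degQ_const F q c
  rw [hc, degQ_x] at h1
  exact one_ne_zero h1

lemma nonconst_y : ¬ IsConstQP F q (Qy F q) := by
  rintro ⟨c, hc⟩
  have h1 := degQ_const F q c
  rw [hc, degQ_y] at h1
  exact one_ne_zero h1

end QPf

open QPf in
theorem stmt_11 (F : Type) [Field F] [CharZero F] (q : F) (n : ℕ) (hn : 1 ≤ n)
    (hqn : q ^ n = 1) (hprim : ∀ k : ℕ, 0 < k → k < n → q ^ k ≠ 1)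
    (p : QPlane F q) (hnc : ¬ IsConstQP F q p) (hp : IsPrimeElt p) :
    (IsCentralElt p ∧ IsIrreducibleQP F q p) ∨
      ∃ lam : F, p = lam • Qx F q ∨ p = lam • Qy F q := by
  have hq0 : q ≠ 0 := by
    intro h
    rw [h, zero_pow (by omega)] at hqn
    exact zero_ne_one hqn
  have hp0 : p ≠ 0 := nonconst_ne_zero F q hnc
  set u : V F := Lmap F q p with hu
  have hu0 : u ≠ 0 := fun h => hp0 ((L_eq_zero_iff F q p).mp h)
  have hdegp : 1 ≤ degQ F q p := degQ_pos_of_nonconst F q hnc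
  -- x-side analysis
  have Hx : (∃ lam : F, p = lam • Qx F q) ∨
      (∃ c : F, ∀ ab ∈ u.support, q ^ ab.2 = c) := by
    set s : QPlane F q := Mmap F q (S1 F q u) with hsdef
    have hLs : Lmap F q s = S1 F q u := LM F q _
    have hpx : p * Qx F q = Qx F q * s := by
      apply L_inj F q
      rw [L_mul, L_mul, L_x, hLs]
      exact LinearMap.congr_fun (intertwine_x F q) u
    rcases hp (Qx F q) s ⟨Qx F q, Or.inl hpx.symm⟩ with hdvd | hdvd
    · obtain ⟨c, hc0, hcx⟩ := exists_scalar_of_dvd F q hq0 hp0 (x_ne_zero F q)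
        (by rw [degQ_x]; exact hdegp) hdvd
      exact Or.inl ⟨c⁻¹, by rw [hcx, smul_smul, inv_mul_cancel₀ hc0, one_smul]⟩
    · have hsne : s ≠ 0 := by
        intro h
        have h2 : S1 F q u = 0 := by rw [← hLs, h, map_zero]
        have h3 := S1_support F q hq0 u
        rw [h2, Finsupp.support_zero] at h3
        exact hu0 (Finsupp.support_eq_empty.mp h3.symm)
      have hdegs : degQ F q s ≤ degQ F q p := by
        have : degQ F q s = degQ F q p := by
          rw [degQ, degQ, hLs, ← hu, degV, degV, S1_support F q hq0]
        exact this.le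
      obtain ⟨c, hc0, hcs⟩ := exists_scalar_of_dvd F q hq0 hp0 hsne hdegs hdvd
      refine Or.inr ⟨c, fun ab hab => ?_⟩
      have h1 : Lmap F q s ab = Lmap F q (c • p) ab := by rw [hcs]
      rw [hLs, S1_apply, map_smul, ← hu, Finsupp.smul_apply, smul_eq_mul] at h1
      exact mul_right_cancel₀ (Finsupp.mem_support_iff.mp hab) h1
  -- y-side analysis
  have Hy : (∃ lam : F, p = lam • Qy F q) ∨
      (∃ d : F, ∀ ab ∈ u.support, q ^ ab.1 = d) := by
    set s : QPlane F q := Mmap F q (S2 F q u) with hsdef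
    have hLs : Lmap F q s = S2 F q u := LM F q _
    have hpy : p * Qy F q = Qy F q * s := by
      apply L_inj F q
      rw [L_mul, L_mul, L_y, hLs]
      exact LinearMap.congr_fun (intertwine_y F q hq0) u
    rcases hp (Qy F q) s ⟨Qy F q, Or.inl hpy.symm⟩ with hdvd | hdvd
    · obtain ⟨c, hc0, hcx⟩ := exists_scalar_of_dvd F q hq0 hp0 (y_ne_zero F q)
        (by rw [degQ_y]; exact hdegp) hdvd
      exact Or.inl ⟨c⁻¹, by rw [hcx, smul_smul, inv_mul_cancel₀ hc0, one_smul]⟩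
    · have hsne : s ≠ 0 := by
        intro h
        have h2 : S2 F q u = 0 := by rw [← hLs, h, map_zero]
        have h3 := S2_support F q hq0 u
        rw [h2, Finsupp.support_zero] at h3
        exact hu0 (Finsupp.support_eq_empty.mp h3.symm)
      have hdegs : degQ F q s ≤ degQ F q p := by
        have : degQ F q s = degQ F q p := by
          rw [degQ, degQ, hLs, ← hu, degV, degV, S2_support F q hq0]
        exact this.le
      obtain ⟨c, hc0, hcs⟩ := exists_scalar_of_dvd F q hq0 hp0 hsne hdegs hdvd
      refine Or.inr ⟨c⁻¹, fun ab hab => ?_⟩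
      have h1 : Lmap F q s ab = Lmap F q (c • p) ab := by rw [hcs]
      rw [hLs, S2_apply, map_smul, ← hu, Finsupp.smul_apply, smul_eq_mul] at h1
      have h2 : (q ^ ab.1)⁻¹ = c :=
        mul_right_cancel₀ (Finsupp.mem_support_iff.mp hab) h1
      rw [← h2, inv_inv]
  rcases Hx with ⟨lam, hlam⟩ | ⟨c, hc⟩
  · exact Or.inr ⟨lam, Or.inl hlam⟩
  rcases Hy with ⟨lam, hlam⟩ | ⟨d, hd⟩
  · exact Or.inr ⟨lam, Or.inr hlam⟩
  by_cases hcone : c = 1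
  · by_cases hdone : d = 1
    · -- p is central and irreducible
      subst hcone; subst hdone
      have hS1u : S1 F q u = u := by
        ext ab
        rw [S1_apply]
        by_cases hab : ab ∈ u.support
        · rw [hc ab hab, one_mul]
        · rw [Finsupp.notMem_support_iff.mp hab, mul_zero]
      have hS2u : S2 F q u = u := by
        ext ab
        rw [S2_apply]
        by_cases hab : ab ∈ u.support
        · rw [hd ab hab, inv_one, one_mul]
        · rw [Finsupp.notMem_support_iff.mp hab, mul_zero]
      have hcomx : p * Qx F q = Qx F q * p := by
        apply L_inj F q
        rw [QPf.L_mul, QPf.L_mul, L_x]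
        have h1 := LinearMap.congr_fun (intertwine_x F q) u
        rw [LinearMap.flip_apply, LinearMap.comp_apply, hS1u] at h1
        exact h1
      have hcomy : p * Qy F q = Qy F q * p := by
        apply L_inj F q
        rw [QPf.L_mul, QPf.L_mul, L_y]
        have h1 := LinearMap.congr_fun (intertwine_y F q hq0) u
        rw [LinearMap.flip_apply, LinearMap.comp_apply, hS2u] at h1
        exact h1
      exact Or.inl ⟨central_of_comm F q p hcomx hcomy,
        hnc, prime_not_reducible F q hq0 hp⟩
    · -- all first coordinates positive : p = x * g
      have hi : ∀ ab ∈ u.support, 1 ≤ ab.1 := by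
        intro ab hab
        rcases Nat.eq_zero_or_pos ab.1 with h0 | h1
        · exfalso; apply hdone; rw [← hd ab hab, h0, pow_zero]
        · exact h1
      set g : QPlane F q := Mmap F q (shX F u) with hgdef
      have hxg : Qx F q * g = p := by
        apply L_inj F q
        rw [QPf.L_mul, LM, L_x, shX_prop F q u hi, hu]
      have hg0 : g ≠ 0 := fun h => hp0 (by rw [← hxg, h, mul_zero])
      by_cases hgc : IsConstQP F q g
      · obtain ⟨c2, hc2⟩ := hgc
        refine Or.inr ⟨c2, Or.inl ?_⟩
        rw [← hxg, ← hc2, Algebra.algebraMap_eq_smul_one, mul_smul_comm, mul_one]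
      · exact absurd ⟨Qx F q, g, nonconst_x F q, hgc, hxg.symm⟩
          (prime_not_reducible F q hq0 hp)
  · -- all second coordinates positive : p = g * y
    have hj : ∀ ab ∈ u.support, 1 ≤ ab.2 := by
      intro ab hab
      rcases Nat.eq_zero_or_pos ab.2 with h0 | h1
      · exfalso; apply hcone; rw [← hc ab hab, h0, pow_zero]
      · exact h1
    set g : QPlane F q := Mmap F q (shY F u) with hgdef
    have hgy : g * Qy F q = p := by
      apply L_inj F q
      rw [QPf.L_mul, LM, L_y, shY_prop F q u hj, hu]
    have hg0 : g ≠ 0 := fun h => hp0 (by rw [← hgy, h, zero_mul])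
    by_cases hgc : IsConstQP F q g
    · obtain ⟨c2, hc2⟩ := hgc
      refine Or.inr ⟨c2, Or.inr ?_⟩
      rw [← hgy, ← hc2, Algebra.algebraMap_eq_smul_one, smul_mul_assoc, one_mul]
    · exact absurd ⟨g, Qy F q, hgc, nonconst_y F q, hgy.symm⟩
        (prime_not_reducible F q hq0 hp)
end
end

section
/- Let F be a field of characteristic zero and let q ∈ F be nonzero. Let p(X) ∈ F[X] be an irreducible polynomial and let P = p(x) be its image in the quantum plane O_q(F²) under the unique F-algebra homomorphism F[X] → O_q(F²) sending X to x. If P is central in O_q(F²), then P is prime in O_q(F²). The same conclusion holds with y in place of x. -/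
noncomputable section

open Polynomial

namespace QQ

variable {F : Type} [Field F]

variable {F : Type} [Field F]

--------------------------------------------------------------------------------
-- PART 1 : the twist `sg` and the twisted multiplication formula `qmul`
--------------------------------------------------------------------------------

def sg (r : F) : Polynomial F →ₐ[F] Polynomial F := aeval (C r * X)

lemma sg_sg (a b : F) (f : F[X]) : sg a (sg b f) = sg (a * b) f := by
  have h : (sg a).comp (sg b) = sg (a * b) := by
    apply Polynomial.algHom_ext
    rw [AlgHom.comp_apply]
    simp only [sg, aeval_X, map_mul, aeval_C, algebraMap_eq]
    rw [← mul_assoc, mul_comm (C b) (C a), ← C_mul]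
  exact DFunLike.congr_fun h f

lemma sg_one (f : F[X]) : sg 1 f = f := by simp [sg]

lemma sg_monomial (r : F) (n : ℕ) (a : F) :
    sg r (monomial n a) = monomial n (r ^ n * a) := by
  simp only [sg, aeval_monomial, mul_pow, ← C_pow, algebraMap_eq]
  rw [← C_mul_X_pow_eq_monomial, ← mul_assoc, mul_comm (C a) (C (r ^ n)), ← C_mul,
    C_mul_X_pow_eq_monomial]

lemma sg_fix_pow {r : F} {p : F[X]} (hp : sg r p = p) (j : ℕ) : sg (r ^ j) p = p := by
  induction j with
  | zero => simpa using sg_one p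
  | succ j ih => rw [pow_succ, ← sg_sg, hp, ih]

lemma sg_dvd {r : F} {p f : F[X]} (hp : sg r p = p) (h : p ∣ f) : p ∣ sg r f := by
  obtain ⟨c, rfl⟩ := h
  exact ⟨sg r c, by rw [map_mul, hp]⟩

lemma sg_dvd_rev {r : F} (hr : r ≠ 0) {p f : F[X]} (hp : sg r p = p) (h : p ∣ sg r f) :
    p ∣ f := by
  have h1 : sg r⁻¹ p = p := by
    nth_rewrite 1 [← hp]
    rw [sg_sg, inv_mul_cancel₀ hr, sg_one]
  have := sg_dvd h1 h
  rwa [sg_sg, inv_mul_cancel₀ hr, sg_one] at this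

def qmul (q : F) (f g : Polynomial (Polynomial F)) : Polynomial (Polynomial F) :=
  f.sum fun j a => g.sum fun k b => monomial (j + k) (a * sg (q ^ j) b)

lemma qmul_monomial (q : F) (j k : ℕ) (a b : F[X]) :
    qmul q (monomial j a) (monomial k b) = monomial (j + k) (a * sg (q ^ j) b) := by
  unfold qmul
  rw [Polynomial.sum_monomial_index]
  · rw [Polynomial.sum_monomial_index]
    simp
  · simp [Polynomial.sum]

lemma zero_qmul (q : F) (g) : qmul q 0 g = 0 := by simp [qmul]

lemma qmul_zero (q : F) (f) : qmul q f 0 = 0 := by simp [qmul, Polynomial.sum_def]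

lemma add_qmul (q : F) (f f' g) : qmul q (f + f') g = qmul q f g + qmul q f' g := by
  unfold qmul
  rw [Polynomial.sum_add_index]
  · simp [Polynomial.sum]
  · intro i b c
    rw [← Polynomial.sum_add]
    congr 1
    ext k d
    rw [add_mul, map_add]

lemma qmul_add (q : F) (f g g') : qmul q f (g + g') = qmul q f g + qmul q f g' := by
  unfold qmul
  rw [← Polynomial.sum_add]
  congr 1
  ext j a
  rw [Polynomial.sum_add_index]
  · simp
  · intro i b c
    rw [map_add, mul_add, map_add]

lemma smul_qmul (q : F) (c : F) (f g) : qmul q (c • f) g = c • qmul q f g := by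
  unfold qmul
  rw [Polynomial.sum_smul_index']
  · simp only [smul_mul_assoc, ← smul_monomial, ← Polynomial.smul_sum]
  · simp [Polynomial.sum_def]

lemma qmul_smul (q : F) (c : F) (f g) : qmul q f (c • g) = c • qmul q f g := by
  have h : ∀ (j : ℕ) (a : F[X]),
      ((c • g).sum fun k b => monomial (j + k) (a * sg (q ^ j) b)) =
        c • (g.sum fun k b => monomial (j + k) (a * sg (q ^ j) b)) := by
    intro j a
    rw [Polynomial.sum_smul_index' g c _ (fun i => by simp)]
    simp only [map_smul, mul_smul_comm, ← smul_monomial, ← Polynomial.smul_sum]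
  unfold qmul
  simp only [h, ← Polynomial.smul_sum]

lemma qmul_coeff (q : F) (f g : Polynomial (Polynomial F)) (n : ℕ) :
    (qmul q f g).coeff n = ∑ jk ∈ f.support ×ˢ g.support,
      if jk.1 + jk.2 = n then f.coeff jk.1 * sg (q ^ jk.1) (g.coeff jk.2) else 0 := by
  rw [Finset.sum_product]
  unfold qmul
  rw [Polynomial.sum_def, Polynomial.finset_sum_coeff]
  apply Finset.sum_congr rfl
  intro j _
  rw [Polynomial.sum_def, Polynomial.finset_sum_coeff]
  apply Finset.sum_congr rfl
  intro k _
  rw [Polynomial.coeff_monomial]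

lemma qmul_monomial_left (q : F) (p : F[X]) (w : Polynomial (Polynomial F)) :
    qmul q (monomial 0 p) w = w.sum fun k b => monomial k (p * b) := by
  unfold qmul
  rw [Polynomial.sum_monomial_index]
  · simp only [pow_zero, sg_one, zero_add]
  · simp [Polynomial.sum_def]

lemma dvd_of_qmul_left (q : F) (p : F[X]) (w : Polynomial (Polynomial F)) (n : ℕ) :
    p ∣ (qmul q (monomial 0 p) w).coeff n := by
  rw [qmul_monomial_left, Polynomial.sum_def, Polynomial.finset_sum_coeff]
  apply Finset.dvd_sum
  intro k _
  rw [Polynomial.coeff_monomial]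
  split
  · exact Dvd.intro _ rfl
  · exact dvd_zero p

lemma exists_qmul_left (q : F) (p : F[X]) (w : Polynomial (Polynomial F))
    (h : ∀ n, p ∣ w.coeff n) : ∃ u, w = qmul q (monomial 0 p) u := by
  have expand : ∀ (s : Finset ℕ) (f : ℕ → F[X]),
      qmul q (monomial 0 p) (∑ n ∈ s, monomial n (f n)) = ∑ n ∈ s, monomial n (p * f n) := by
    intro s f
    induction s using Finset.induction_on with
    | empty => simp [qmul_zero]
    | @insert _ _ hx ih =>
        rw [Finset.sum_insert hx, qmul_add, ih, Finset.sum_insert hx, qmul_monomial,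
          pow_zero, sg_one, zero_add]
  refine ⟨∑ n ∈ w.support, monomial n ((h n).choose), ?_⟩
  rw [expand]
  conv_lhs => rw [w.as_sum_support]
  apply Finset.sum_congr rfl
  intro n _
  rw [← (h n).choose_spec]

lemma core (q : F) (hq : q ≠ 0) (p : F[X]) (hp : Prime p) (hfix : sg q p = p)
    (ws wt : Polynomial (Polynomial F)) (h : ∀ n, p ∣ (qmul q ws wt).coeff n) :
    (∀ n, p ∣ ws.coeff n) ∨ (∀ n, p ∣ wt.coeff n) := by
  by_contra hc
  push_neg at hc
  obtain ⟨⟨n1, hn1⟩, n2, hn2⟩ := hc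
  classical
  set Js := ws.support.filter (fun j => ¬ p ∣ ws.coeff j) with hJs
  set Kt := wt.support.filter (fun j => ¬ p ∣ wt.coeff j) with hKt
  have hJne : Js.Nonempty :=
    ⟨n1, Finset.mem_filter.mpr ⟨mem_support_iff.mpr (fun h0 => hn1 (h0 ▸ dvd_zero p)), hn1⟩⟩
  have hKne : Kt.Nonempty :=
    ⟨n2, Finset.mem_filter.mpr ⟨mem_support_iff.mpr (fun h0 => hn2 (h0 ▸ dvd_zero p)), hn2⟩⟩
  set j0 := Js.max' hJne with hj0def
  set k0 := Kt.max' hKne with hk0def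
  have hj0 : ¬ p ∣ ws.coeff j0 := (Finset.mem_filter.mp (Js.max'_mem hJne)).2
  have hk0 : ¬ p ∣ wt.coeff k0 := (Finset.mem_filter.mp (Kt.max'_mem hKne)).2
  have hj0mem : j0 ∈ ws.support := (Finset.mem_filter.mp (Js.max'_mem hJne)).1
  have hk0mem : k0 ∈ wt.support := (Finset.mem_filter.mp (Kt.max'_mem hKne)).1
  have hmaxJ : ∀ j, ¬ p ∣ ws.coeff j → j ≤ j0 := by
    intro j hj
    exact Js.le_max' j (Finset.mem_filter.mpr
      ⟨mem_support_iff.mpr (fun h0 => hj (h0 ▸ dvd_zero p)), hj⟩)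
  have hmaxK : ∀ k, ¬ p ∣ wt.coeff k → k ≤ k0 := by
    intro k hk
    exact Kt.le_max' k (Finset.mem_filter.mpr
      ⟨mem_support_iff.mpr (fun h0 => hk (h0 ▸ dvd_zero p)), hk⟩)
  have h0 := h (j0 + k0)
  rw [qmul_coeff] at h0
  have hmem : ((j0, k0) : ℕ × ℕ) ∈ ws.support ×ˢ wt.support :=
    Finset.mem_product.mpr ⟨hj0mem, hk0mem⟩
  rw [← Finset.add_sum_erase _ _ hmem] at h0
  have hrest : p ∣ ∑ jk ∈ (ws.support ×ˢ wt.support).erase (j0, k0),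
      (if jk.1 + jk.2 = j0 + k0 then ws.coeff jk.1 * sg (q ^ jk.1) (wt.coeff jk.2) else 0) := by
    apply Finset.dvd_sum
    intro jk hjk
    obtain ⟨hne, _⟩ := Finset.mem_erase.mp hjk
    split
    · rename_i hsum
      by_cases hdj : p ∣ ws.coeff jk.1
      · exact hdj.mul_right _
      · have hle : jk.1 ≤ j0 := hmaxJ _ hdj
        have hlt : jk.1 < j0 := by
          rcases lt_or_eq_of_le hle with h' | h'
          · exact h'
          · exfalso
            apply hne
            have : jk.2 = k0 := by omega
            exact Prod.ext h' this
        have hk : ¬ jk.2 ≤ k0 := by omega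
        have hdk : p ∣ wt.coeff jk.2 := by
          by_contra hdk
          exact hk (hmaxK _ hdk)
        exact ((sg_dvd (sg_fix_pow hfix jk.1) hdk).mul_left _)
    · exact dvd_zero p
  have hkey : p ∣ ws.coeff j0 * sg (q ^ j0) (wt.coeff k0) := by
    rw [if_pos rfl] at h0
    exact (dvd_add_right hrest).mp (by rwa [add_comm] at h0)
  rcases hp.2.2 _ _ hkey with hk | hk
  · exact hj0 hk
  · exact hk0 (sg_dvd_rev (pow_ne_zero _ hq) (sg_fix_pow hfix j0) hk)

section Ops

variable (q : F)

/-- multiplication by (inner) `x` -/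
def Xop : Module.End F (Polynomial (Polynomial F)) := LinearMap.mulLeft F (C X)

/-- twisted multiplication by (outer) `y` -/
def Yop : Module.End F (Polynomial (Polynomial F)) :=
  (LinearMap.mulLeft F (X : Polynomial (Polynomial F))).comp (mapAlgHom (sg q)).toLinearMap

lemma Xop_monomial (l : ℕ) (c : F[X]) : Xop (monomial l c) = monomial l (X * c) := by
  simp [Xop, C_mul_monomial]

lemma Yop_monomial (l : ℕ) (c : F[X]) : Yop q (monomial l c) = monomial (l + 1) (sg q c) := by
  simp only [Yop, LinearMap.comp_apply, AlgHom.toLinearMap_apply, mapAlgHom, AlgHom.coe_mk,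
    RingHom.coe_mk, MonoidHom.coe_mk, OneHom.coe_mk, coe_mapRingHom, map_monomial, LinearMap.mulLeft_apply]
  rw [mul_comm, monomial_mul_X]
  rfl

lemma Xop_pow (i l : ℕ) (c : F[X]) : (Xop ^ i) (monomial l c) = monomial l (X ^ i * c) := by
  induction i generalizing c with
  | zero => simp
  | succ i ih => rw [pow_succ, Module.End.mul_apply, Xop_monomial, ih, ← mul_assoc, ← pow_succ]

lemma Yop_pow (j l : ℕ) (c : F[X]) :
    ((Yop q) ^ j) (monomial l c) = monomial (l + j) (sg (q ^ j) c) := by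
  induction j with
  | zero => simp [sg_one]
  | succ j ih =>
      rw [pow_succ', Module.End.mul_apply, ih, Yop_monomial, sg_sg, ← pow_succ', add_assoc]

lemma YX_rel : Yop q * Xop = q • (Xop * Yop q) := by
  apply LinearMap.ext
  intro v
  induction v using Polynomial.induction_on' with
  | add p r hp hr => simp only [Module.End.mul_apply, map_add, hp, hr,
      LinearMap.smul_apply]
  | monomial l c =>
      have hx : sg q (X : F[X]) = C q * X := by simp [sg]
      rw [LinearMap.smul_apply, Module.End.mul_apply, Module.End.mul_apply, Xop_monomial,
        Yop_monomial, Yop_monomial, Xop_monomial, map_mul, hx, smul_monomial, smul_eq_C_mul,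
        mul_assoc]

end Ops

section Master

variable {q0 q : F} {a b : QPlane F q0}

lemma b_pow_a (hab : b * a = q • (a * b)) (k : ℕ) : b * a ^ k = q ^ k • (a ^ k * b) := by
  induction k with
  | zero => simp
  | succ k ih =>
      rw [pow_succ, ← mul_assoc, ih, smul_mul_assoc, mul_assoc, hab, mul_smul_comm,
        smul_smul, ← pow_succ, ← mul_assoc]

lemma bj_ak (hab : b * a = q • (a * b)) (j k : ℕ) : b ^ j * a ^ k = q ^ (j * k) • (a ^ k * b ^ j) := by
  induction j with
  | zero => simp
  | succ j ih =>
      rw [pow_succ, mul_assoc, b_pow_a hab, mul_smul_comm, ← mul_assoc, ih, smul_mul_assoc,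
        smul_smul, ← pow_add, mul_assoc, ← pow_succ]
      ring_nf

lemma mono_mul (hab : b * a = q • (a * b)) (i j k l : ℕ) :
    (a ^ i * b ^ j) * (a ^ k * b ^ l) = q ^ (j * k) • (a ^ (i + k) * b ^ (j + l)) := by
  rw [mul_assoc, ← mul_assoc (b ^ j), bj_ak hab, smul_mul_assoc, mul_smul_comm, pow_add,
    pow_add, ← mul_assoc, ← mul_assoc, mul_assoc (a ^ i * a ^ k)]

lemma span_top (hab : b * a = q • (a * b)) (hadj : Algebra.adjoin F {a, b} = ⊤) (z : QPlane F q0) :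
    z ∈ Submodule.span F (Set.range fun ij : ℕ × ℕ => a ^ ij.1 * b ^ ij.2) := by
  set T := Submodule.span F (Set.range fun ij : ℕ × ℕ => a ^ ij.1 * b ^ ij.2) with hT
  have h1 : (1 : QPlane F q0) ∈ T := Submodule.subset_span ⟨(0, 0), by simp⟩
  have hmul : ∀ x y : QPlane F q0, x ∈ T → y ∈ T → x * y ∈ T := by
    intro x y hx hy
    have hle : T * T ≤ T := by
      rw [hT, Submodule.span_mul_span, Submodule.span_le]
      rintro _ ⟨u, ⟨⟨i, j⟩, rfl⟩, v, ⟨⟨k, l⟩, rfl⟩, rfl⟩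
      show (a ^ i * b ^ j) * (a ^ k * b ^ l) ∈ _
      rw [mono_mul hab]
      exact Submodule.smul_mem _ _ (Submodule.subset_span ⟨(i + k, j + l), rfl⟩)
    exact hle (Submodule.mul_mem_mul hx hy)
  have hle : Algebra.adjoin F {a, b} ≤ Submodule.toSubalgebra T h1 hmul := by
    apply Algebra.adjoin_le
    rintro w (rfl | rfl)
    · exact Submodule.subset_span ⟨(1, 0), by simp⟩
    · exact Submodule.subset_span ⟨(0, 1), by simp⟩
  rw [hadj] at hle
  exact hle trivial

variable (ψ : QPlane F q0 →ₐ[F] Module.End F (Polynomial (Polynomial F)))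

def Ee : QPlane F q0 →ₗ[F] Polynomial (Polynomial F) where
  toFun z := ψ z 1
  map_add' z w := by show ψ (z + w) 1 = ψ z 1 + ψ w 1; rw [map_add]; rfl
  map_smul' c z := by
    show ψ (c • z) 1 = (RingHom.id F) c • ψ z 1
    rw [map_smul]; rfl

lemma Ee_apply (z : QPlane F q0) : Ee ψ z = ψ z 1 := rfl

variable {ψ}

lemma Ee_mono (hψa : ψ a = Xop) (hψb : ψ b = Yop q) (i j : ℕ) :
    Ee ψ (a ^ i * b ^ j) = monomial j ((X : F[X]) ^ i) := by
  rw [Ee_apply, map_mul, map_pow, map_pow, hψa, hψb, Module.End.mul_apply,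
    show (1 : Polynomial (Polynomial F)) = monomial 0 1 from monomial_zero_one.symm,
    Yop_pow, Xop_pow, map_one, mul_one, zero_add]

lemma psi_eq_qmul (hab : b * a = q • (a * b)) (hadj : Algebra.adjoin F {a, b} = ⊤)
    (hψa : ψ a = Xop) (hψb : ψ b = Yop q) (z : QPlane F q0) :
    ∀ v, ψ z v = qmul q (Ee ψ z) v := by
  refine Submodule.span_induction ?_ ?_ ?_ ?_ (span_top hab hadj z)
  · rintro _ ⟨⟨i, j⟩, rfl⟩
    intro v
    rw [Ee_mono hψa hψb]
    induction v using Polynomial.induction_on' with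
    | add f g hf hg => rw [map_add, qmul_add, hf, hg]
    | monomial l c =>
        rw [map_mul, map_pow, map_pow, hψa, hψb, Module.End.mul_apply, Yop_pow, Xop_pow,
          qmul_monomial, add_comm l j]
  · intro v
    rw [map_zero, map_zero, zero_qmul, LinearMap.zero_apply]
  · intro x y hx hy hpx hpy v
    rw [map_add, map_add, LinearMap.add_apply, hpx, hpy, add_qmul]
  · intro c x hx hpx v
    rw [map_smul, map_smul, LinearMap.smul_apply, hpx, smul_qmul]

lemma Ee_mul (hab : b * a = q • (a * b)) (hadj : Algebra.adjoin F {a, b} = ⊤)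
    (hψa : ψ a = Xop) (hψb : ψ b = Yop q) (z w : QPlane F q0) :
    Ee ψ (z * w) = qmul q (Ee ψ z) (Ee ψ w) := by
  rw [Ee_apply, map_mul, Module.End.mul_apply, psi_eq_qmul hab hadj hψa hψb z, Ee_apply]
  rfl

lemma Ee_inj (hab : b * a = q • (a * b)) (hadj : Algebra.adjoin F {a, b} = ⊤)
    (hψa : ψ a = Xop) (hψb : ψ b = Yop q) : Function.Injective (Ee ψ) := by
  suffices h : ∀ u : QPlane F q0, Ee ψ u = 0 → u = 0 by
    intro z w hzw
    have := h (z - w) (by rw [map_sub, hzw, sub_self])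
    exact sub_eq_zero.mp this
  intro u hu
  obtain ⟨c, hc⟩ := Finsupp.mem_span_range_iff_exists_finsupp.mp (span_top hab hadj u)
  have hterm : ∀ (uv ij : ℕ × ℕ) (r : F),
      (((r • monomial uv.2 ((X : F[X]) ^ uv.1) : Polynomial (Polynomial F)).coeff
        ij.2).coeff ij.1) = if uv = ij then r else 0 := by
    intro uv ij r
    rw [Polynomial.coeff_smul, Polynomial.coeff_monomial]
    by_cases h2 : uv.2 = ij.2
    · rw [if_pos h2, Polynomial.coeff_smul, coeff_X_pow]
      by_cases h1 : ij.1 = uv.1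
      · rw [if_pos h1, if_pos (Prod.ext h1.symm h2), smul_eq_mul, mul_one]
      · rw [if_neg h1, if_neg (fun hh => h1 (by rw [hh])), smul_eq_mul, mul_zero]
    · rw [if_neg h2, smul_zero, Polynomial.coeff_zero,
        if_neg (fun hh => h2 (by rw [hh]))]
  have hEe : (0 : Polynomial (Polynomial F)) =
      c.sum fun ij r => r • monomial ij.2 ((X : F[X]) ^ ij.1) := by
    rw [← hu, ← hc, map_finsuppSum]
    refine Finsupp.sum_congr ?_
    intro ij _
    rw [map_smul, Ee_mono hψa hψb]
  have hcz : ∀ ij : ℕ × ℕ, c ij = 0 := by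
    intro ij
    have h1 := congrArg (fun v : Polynomial (Polynomial F) => (v.coeff ij.2).coeff ij.1) hEe
    simp only [Polynomial.coeff_zero] at h1
    rw [Finsupp.sum, Polynomial.finset_sum_coeff, Polynomial.finset_sum_coeff] at h1
    simp only [hterm] at h1
    rw [Finset.sum_ite_eq' c.support ij c] at h1
    by_cases hmem : ij ∈ c.support
    · rw [if_pos hmem] at h1
      exact h1.symm
    · exact Finsupp.notMem_support_iff.mp hmem
  have hc0 : c = 0 := Finsupp.ext hcz
  rw [← hc, hc0, Finsupp.sum_zero_index]

lemma Ee_surj (hab : b * a = q • (a * b)) (hadj : Algebra.adjoin F {a, b} = ⊤)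
    (hψa : ψ a = Xop) (hψb : ψ b = Yop q) : Function.Surjective (Ee ψ) := by
  intro v
  induction v using Polynomial.induction_on' with
  | add f g hf hg =>
      obtain ⟨z1, hz1⟩ := hf
      obtain ⟨z2, hz2⟩ := hg
      exact ⟨z1 + z2, by rw [map_add, hz1, hz2]⟩
  | monomial n c =>
      induction c using Polynomial.induction_on' with
      | add f g hf hg =>
          obtain ⟨z1, hz1⟩ := hf
          obtain ⟨z2, hz2⟩ := hg
          exact ⟨z1 + z2, by rw [map_add, hz1, hz2, ← map_add]⟩
      | monomial i r =>
          refine ⟨r • (a ^ i * b ^ n), ?_⟩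
          rw [map_smul, Ee_mono hψa hψb, smul_monomial, smul_eq_C_mul,
            C_mul_X_pow_eq_monomial]

lemma Ee_aeval (hψa : ψ a = Xop) (hψb : ψ b = Yop q) (p : F[X]) :
    Ee ψ (Polynomial.aeval a p) = monomial 0 p := by
  induction p using Polynomial.induction_on' with
  | add f g hf hg => rw [map_add, map_add, hf, hg, ← map_add]
  | monomial n r =>
      rw [aeval_monomial]
      have h2 : (algebraMap F (QPlane F q0)) r * a ^ n = r • (a ^ n * b ^ 0) := by
        rw [pow_zero, mul_one, Algebra.smul_def]
      rw [h2, map_smul, Ee_mono hψa hψb, smul_monomial, smul_eq_C_mul,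
        C_mul_X_pow_eq_monomial]

lemma central_fix (hab : b * a = q • (a * b)) (hadj : Algebra.adjoin F {a, b} = ⊤)
    (hψa : ψ a = Xop) (hψb : ψ b = Yop q) {p : F[X]}
    (hcent : IsCentralElt (Polynomial.aeval a p)) : sg q p = p := by
  have h2 := congrArg (Ee ψ) (hcent b)
  rw [Ee_mul hab hadj hψa hψb, Ee_mul hab hadj hψa hψb, Ee_aeval hψa hψb] at h2
  have hb : Ee ψ b = monomial 1 (1 : F[X]) := by
    have h := Ee_mono hψa hψb (q := q) 0 1
    rw [pow_zero, pow_one, one_mul, pow_zero] at h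
    exact h
  rw [hb, qmul_monomial, qmul_monomial] at h2
  have h3 := congrArg (fun v : Polynomial (Polynomial F) => v.coeff 1) h2
  simp only [Polynomial.coeff_monomial, zero_add, add_zero, if_pos rfl, pow_zero, pow_one,
    sg_one, map_one, mul_one, one_mul] at h3
  exact h3.symm

lemma master (hq : q ≠ 0) (hab : b * a = q • (a * b))
    (hadj : Algebra.adjoin F {a, b} = ⊤)
    (hψa : ψ a = Xop) (hψb : ψ b = Yop q) {p : F[X]} (hirr : Irreducible p)
    (hcent : IsCentralElt (Polynomial.aeval a p)) : IsPrimeElt (Polynomial.aeval a p) := by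
  have hp : Prime p := hirr.prime
  have hfix : sg q p = p := central_fix hab hadj hψa hψb hcent
  intro s t hst
  obtain ⟨v, hv⟩ := hst
  have hst2 : s * t = (Polynomial.aeval a p) * v := by
    rcases hv with h | h
    · exact h
    · rw [h, ← hcent v]
  have hdvd : ∀ n, p ∣ (qmul q (Ee ψ s) (Ee ψ t)).coeff n := by
    intro n
    rw [← Ee_mul hab hadj hψa hψb, hst2, Ee_mul hab hadj hψa hψb, Ee_aeval hψa hψb]
    exact dvd_of_qmul_left q p _ n
  rcases core q hq p hp hfix _ _ hdvd with h | h
  · left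
    obtain ⟨u', hu'⟩ := exists_qmul_left q p _ h
    obtain ⟨u, hu⟩ := Ee_surj hab hadj hψa hψb u'
    refine ⟨u, Or.inl ?_⟩
    apply Ee_inj hab hadj hψa hψb
    rw [Ee_mul hab hadj hψa hψb, Ee_aeval hψa hψb, hu, ← hu']
  · right
    obtain ⟨u', hu'⟩ := exists_qmul_left q p _ h
    obtain ⟨u, hu⟩ := Ee_surj hab hadj hψa hψb u'
    refine ⟨u, Or.inl ?_⟩
    apply Ee_inj hab hadj hψa hψb
    rw [Ee_mul hab hadj hψa hψb, Ee_aeval hψa hψb, hu, ← hu']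

end Master

section Final

variable (q : F)

lemma qrel : Qy F q * Qx F q = q • (Qx F q * Qy F q) := by
  have h := RingQuot.mkAlgHom_rel F (QRel.rel (F := F) (q := q))
  rw [map_mul, map_smul, map_mul] at h
  exact h

lemma adj_top : Algebra.adjoin F {Qx F q, Qy F q} = ⊤ := by
  rw [eq_top_iff]
  rintro z -
  obtain ⟨w, rfl⟩ := RingQuot.mkAlgHom_surjective F (QRel F q) z
  have hw : w ∈ Algebra.adjoin F (Set.range (FreeAlgebra.ι F)) := by
    rw [FreeAlgebra.adjoin_range_ι]; trivial
  have hmem : RingQuot.mkAlgHom F (QRel F q) w ∈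
      (Algebra.adjoin F (Set.range (FreeAlgebra.ι F))).map (RingQuot.mkAlgHom F (QRel F q)) :=
    ⟨w, hw, rfl⟩
  rw [AlgHom.map_adjoin] at hmem
  refine Algebra.adjoin_mono ?_ hmem
  rintro _ ⟨_, ⟨i, rfl⟩, rfl⟩
  fin_cases i
  · exact Set.mem_insert _ _
  · exact Set.mem_insert_of_mem _ rfl

def psiX : QPlane F q →ₐ[F] Module.End F (Polynomial (Polynomial F)) :=
  RingQuot.liftAlgHom F ⟨FreeAlgebra.lift F ![Xop, Yop q], by
    rintro _ _ ⟨⟩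
    rw [map_mul, map_smul, map_mul]
    simp only [FreeAlgebra.lift_ι_apply, Matrix.cons_val_zero, Matrix.cons_val_one,
      Matrix.head_cons]
    exact YX_rel q⟩

lemma psiX_x : psiX q (Qx F q) = Xop := by
  rw [Qx, psiX, RingQuot.liftAlgHom_mkAlgHom_apply, FreeAlgebra.lift_ι_apply]
  simp

lemma psiX_y : psiX q (Qy F q) = Yop q := by
  rw [Qy, psiX, RingQuot.liftAlgHom_mkAlgHom_apply, FreeAlgebra.lift_ι_apply]
  simp

def psiY (hq : q ≠ 0) : QPlane F q →ₐ[F] Module.End F (Polynomial (Polynomial F)) :=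
  RingQuot.liftAlgHom F ⟨FreeAlgebra.lift F ![Yop q⁻¹, Xop], by
    rintro _ _ ⟨⟩
    rw [map_mul, map_smul, map_mul]
    simp only [FreeAlgebra.lift_ι_apply, Matrix.cons_val_zero, Matrix.cons_val_one,
      Matrix.head_cons]
    rw [YX_rel q⁻¹, smul_smul, mul_inv_cancel₀ hq, one_smul]⟩

lemma psiY_y (hq : q ≠ 0) : psiY q hq (Qy F q) = Xop := by
  rw [Qy, psiY, RingQuot.liftAlgHom_mkAlgHom_apply, FreeAlgebra.lift_ι_apply]
  simp

lemma psiY_x (hq : q ≠ 0) : psiY q hq (Qx F q) = Yop q⁻¹ := by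
  rw [Qx, psiY, RingQuot.liftAlgHom_mkAlgHom_apply, FreeAlgebra.lift_ι_apply]
  simp

end Final

end QQ

theorem stmt_12 (F : Type) [Field F] [CharZero F] (q : F) (hq : q ≠ 0)
    (p : Polynomial F) (hirr : Irreducible p) :
    (IsCentralElt (Polynomial.aeval (Qx F q) p) →
        IsPrimeElt (Polynomial.aeval (Qx F q) p)) ∧
    (IsCentralElt (Polynomial.aeval (Qy F q) p) →
        IsPrimeElt (Polynomial.aeval (Qy F q) p)) := by
  constructor
  · intro hcent
    exact QQ.master hq (QQ.qrel q) (QQ.adj_top q) (QQ.psiX_x q) (QQ.psiX_y q) hirr hcent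
  · intro hcent
    have habY : Qx F q * Qy F q = q⁻¹ • (Qy F q * Qx F q) := by
      rw [QQ.qrel q, smul_smul, inv_mul_cancel₀ hq, one_smul]
    have hadjY : Algebra.adjoin F {Qy F q, Qx F q} = ⊤ := by
      rw [Set.pair_comm]; exact QQ.adj_top q
    exact QQ.master (inv_ne_zero hq) habY hadjY (QQ.psiY_y q hq) (QQ.psiY_x q hq) hirr hcent


end
end
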